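/- arXiv:2209.06770 — 4 statements merged into one kernel-verified Lean document; each statement's English description precedes it below -/
import Mathlib

section
/- For any positive integer k, any complex number α not in the set of nonpositive integers, and any real x with |x| < 1, the following power series identity holds: ((-1)^k / k!) · log^k(1-x) / (1-x)^α = Σ_{n≥1} C(n+α-1, n) · ζ_n({1}_k; α) · x^n, where C(n+α-1,n) = Γ(n+α)/(Γ(n+1)Γ(α)) = (α)_n / n! and ζ_n({1}_k; α) = Σ_{n ≥ n_1 > ... > n_k ≥ 1} 1/((n_1+α-1)(n_2+α-1)⋯(n_k+α-1)). -/
/-- Pochhammer symbol `(α)_n = α(α+1)⋯(α+n-1)`. -/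
noncomputable def poch (α : ℂ) (n : ℕ) : ℂ := ∏ i ∈ Finset.range n, (α + i)

/-- Hurwitz-type multiple harmonic sum `ζ_n({1}_k; a) = Σ_{n ≥ n_1 > ⋯ > n_k ≥ 1} Π 1/(n_j+a-1)`. -/
noncomputable def hmhs (a : ℂ) : ℕ → ℕ → ℂ
  | _, 0 => 1
  | n, k + 1 => ∑ j ∈ Finset.Icc 1 n, (1 / ((j : ℂ) + a - 1)) * hmhs a (j - 1) k
  termination_by n k => k

/-- Hurwitz-type multiple harmonic star sum `ζ_n^⋆({1}_k; a) = Σ_{n ≥ n_1 ≥ ⋯ ≥ n_k ≥ 1} Π 1/(n_j+a-1)`. -/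
noncomputable def hmhsStar (a : ℂ) : ℕ → ℕ → ℂ
  | _, 0 => 1
  | n, k + 1 => ∑ j ∈ Finset.Icc 1 n, (1 / ((j : ℂ) + a - 1)) * hmhsStar a j k
  termination_by n k => k

open Filter Topology Set

lemma hmhs_zero (a : ℂ) (n : ℕ) : hmhs a n 0 = 1 := by rw [hmhs]

lemma hmhs_succ (a : ℂ) (n k : ℕ) :
    hmhs a n (k+1) = ∑ j ∈ Finset.Icc 1 n, (1 / ((j : ℂ) + a - 1)) * hmhs a (j - 1) k := by
  rw [hmhs]

lemma hmhs_zero_succ (a : ℂ) (k : ℕ) : hmhs a 0 (k+1) = 0 := by rw [hmhs]; simp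

lemma hmhs_rec (a : ℂ) (n k : ℕ) :
    hmhs a (n+1) (k+1) = hmhs a n (k+1) + (1 / (((n+1 : ℕ) : ℂ) + a - 1)) * hmhs a n k := by
  rw [hmhs_succ, hmhs_succ, Finset.sum_Icc_succ_top (Nat.one_le_iff_ne_zero.mpr (Nat.succ_ne_zero n))]
  simp

noncomputable def aa (α : ℂ) (k n : ℕ) : ℂ := poch α n / (n.factorial : ℂ) * hmhs α n k

noncomputable def MM (α : ℂ) (D : ℝ) (k n : ℕ) : ℝ :=
  ‖poch α n‖ / (n.factorial : ℝ) * (((n : ℝ) + 1) * D) ^ k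

section

variable {α : ℂ} {D : ℝ}

lemma alpha_add_ne (hα : ∀ m : ℕ, α ≠ -(m : ℂ)) (n : ℕ) : α + (n : ℂ) ≠ 0 := by
  intro h
  exact hα n (by linear_combination h)

lemma poch_ne_zero (hα : ∀ m : ℕ, α ≠ -(m : ℂ)) (n : ℕ) : poch α n ≠ 0 := by
  rw [poch, Finset.prod_ne_zero_iff]
  exact fun i _ => alpha_add_ne hα i

lemma poch_succ (n : ℕ) : poch α (n+1) = poch α n * (α + n) := Finset.prod_range_succ _ _

lemma exists_D (α : ℂ) : ∃ D : ℝ, 1 ≤ D ∧ ∀ n : ℕ, ‖1 / ((n : ℂ) + α - 1)‖ ≤ D := by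
  have h1 : Tendsto (fun n : ℕ => ‖(n : ℂ) + α - 1‖) atTop atTop := by
    apply tendsto_atTop_mono (f := fun n : ℕ => (n : ℝ) + (-‖α - 1‖)) (fun n => ?_)
      (tendsto_atTop_add_const_right atTop (-‖α - 1‖) tendsto_natCast_atTop_atTop)
    have e2 := norm_add_le ((n:ℂ) + α - 1) (1 - α)
    have e4 : ((n:ℂ) + α - 1) + (1 - α) = (n:ℂ) := by ring
    rw [e4] at e2
    have e5 : ‖(1:ℂ) - α‖ = ‖α - 1‖ := norm_sub_rev _ _
    have e3 : ‖(n:ℂ)‖ = (n : ℝ) := Complex.norm_natCast n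
    show (n:ℝ) + -‖α - 1‖ ≤ ‖(n:ℂ) + α - 1‖
    linarith
  have h2 : Tendsto (fun n : ℕ => ‖1 / ((n : ℂ) + α - 1)‖) atTop (𝓝 0) := by
    simp only [norm_div, norm_one, one_div, norm_inv]
    exact h1.inv_tendsto_atTop
  obtain ⟨C, hC⟩ := h2.bddAbove_range
  refine ⟨max 1 C, le_max_left _ _, fun n => ?_⟩
  exact le_trans (hC (Set.mem_range_self n)) (le_max_right _ _)

lemma hmhs_bound (hD1 : 1 ≤ D) (hD : ∀ n : ℕ, ‖1 / ((n : ℂ) + α - 1)‖ ≤ D) :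
    ∀ (k n m : ℕ), m ≤ n → ‖hmhs α m k‖ ≤ ((n : ℝ) * D) ^ k := by
  intro k
  induction k with
  | zero => intro n m _; simp [hmhs_zero]
  | succ k ih =>
    intro n m hmn
    rw [hmhs_succ]
    have hD0 : (0:ℝ) ≤ D := le_trans zero_le_one hD1
    have hterm : ∀ j ∈ Finset.Icc 1 m, ‖(1 / ((j : ℂ) + α - 1)) * hmhs α (j - 1) k‖
        ≤ D * ((n : ℝ) * D) ^ k := by
      intro j hj
      rw [norm_mul]
      have hj' := Finset.mem_Icc.mp hj
      have h2 : ‖hmhs α (j-1) k‖ ≤ ((n : ℝ) * D) ^ k := ih n (j-1) (by omega)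
      exact mul_le_mul (hD j) h2 (norm_nonneg _) hD0
    calc ‖∑ j ∈ Finset.Icc 1 m, (1 / ((j : ℂ) + α - 1)) * hmhs α (j - 1) k‖
        ≤ ∑ j ∈ Finset.Icc 1 m, ‖(1 / ((j : ℂ) + α - 1)) * hmhs α (j - 1) k‖ :=
          norm_sum_le _ _
      _ ≤ ∑ _j ∈ Finset.Icc 1 m, D * ((n : ℝ) * D) ^ k := Finset.sum_le_sum hterm
      _ = (m : ℝ) * (D * ((n : ℝ) * D) ^ k) := by
          rw [Finset.sum_const, Nat.card_Icc]
          simp [nsmul_eq_mul]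
      _ ≤ (n : ℝ) * (D * ((n : ℝ) * D) ^ k) := by
          apply mul_le_mul_of_nonneg_right (by exact_mod_cast hmn)
          positivity
      _ = ((n : ℝ) * D) ^ (k+1) := by ring

lemma aa_norm_le (hD1 : 1 ≤ D) (hD : ∀ n : ℕ, ‖1 / ((n : ℂ) + α - 1)‖ ≤ D) (k n : ℕ) :
    ‖aa α k n‖ ≤ MM α D k n := by
  rw [aa, MM, norm_mul, norm_div]
  have hD0 : (0:ℝ) ≤ D := le_trans zero_le_one hD1
  have h1 : ‖hmhs α n k‖ ≤ ((n : ℝ) * D) ^ k := hmhs_bound hD1 hD k n n le_rfl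
  have h2 : ((n : ℝ) * D) ^ k ≤ (((n : ℝ) + 1) * D) ^ k := by
    apply pow_le_pow_left₀ (by positivity)
    nlinarith [Nat.cast_nonneg (α := ℝ) n]
  rw [Complex.norm_natCast]
  apply mul_le_mul_of_nonneg_left (h1.trans h2)
  positivity

lemma MM_pos (hα : ∀ m : ℕ, α ≠ -(m : ℂ)) (hD1 : 1 ≤ D) (k n : ℕ) : 0 < MM α D k n := by
  rw [MM]
  have h1 : 0 < ‖poch α n‖ := norm_pos_iff.mpr (poch_ne_zero hα n)
  have h2 : (0:ℝ) < n.factorial := by exact_mod_cast n.factorial_pos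
  have h3 : (0:ℝ) < ((n:ℝ)+1) * D := by nlinarith [Nat.cast_nonneg (α := ℝ) n]
  positivity

lemma MM_succ_le (hD1 : 1 ≤ D) (k n : ℕ) :
    MM α D k (n+1) ≤ ((1 + ‖α‖) * 2 ^ k) * MM α D k n := by
  have hD0 : (0:ℝ) ≤ D := le_trans zero_le_one hD1
  have hfact : (((n+1).factorial : ℕ) : ℝ) = ((n:ℝ)+1) * (n.factorial : ℝ) := by
    rw [Nat.factorial_succ]; push_cast; ring
  have hpoch : ‖poch α (n+1)‖ = ‖poch α n‖ * ‖α + n‖ := by rw [poch_succ, norm_mul]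
  have hn1 : (0:ℝ) < (n:ℝ) + 1 := by positivity
  have hA : ‖α + (n : ℂ)‖ / ((n:ℝ)+1) ≤ 1 + ‖α‖ := by
    rw [div_le_iff₀ hn1]
    calc ‖α + (n : ℂ)‖ ≤ ‖α‖ + ‖(n : ℂ)‖ := norm_add_le _ _
      _ = ‖α‖ + (n : ℝ) := by rw [Complex.norm_natCast]
      _ ≤ (1 + ‖α‖) * ((n:ℝ)+1) := by nlinarith [norm_nonneg α, Nat.cast_nonneg (α := ℝ) n]
  have hB : ((((n+1:ℕ):ℝ) + 1) * D) ^ k ≤ 2 ^ k * ((((n:ℝ)+1) * D) ^ k) := by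
    rw [← mul_pow]
    apply pow_le_pow_left₀ (by positivity)
    push_cast; nlinarith [Nat.cast_nonneg (α := ℝ) n]
  have hpos : (0:ℝ) ≤ ‖poch α n‖ / (n.factorial : ℝ) := by positivity
  calc MM α D k (n+1)
      = (‖poch α n‖ / (n.factorial : ℝ)) * ((‖α + (n:ℂ)‖ / ((n:ℝ)+1)) * (((((n+1:ℕ):ℝ)) + 1) * D) ^ k) := by
        rw [MM, hfact, hpoch]
        have f1 : ((n.factorial : ℕ) : ℝ) ≠ 0 := by positivity
        field_simp
    _ ≤ (‖poch α n‖ / (n.factorial : ℝ)) * ((1 + ‖α‖) * (2 ^ k * ((((n:ℝ)+1) * D) ^ k))) := by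
        apply mul_le_mul_of_nonneg_left _ hpos
        apply mul_le_mul hA hB (by positivity) (by positivity)
    _ = ((1 + ‖α‖) * 2 ^ k) * MM α D k n := by rw [MM]; ring


lemma tendstoA : Tendsto (fun n : ℕ => ((n:ℝ)+2)/((n:ℝ)+1)) atTop (𝓝 1) := by
  have h0 : Tendsto (fun n:ℕ => 1 + 1/((n:ℝ)+1)) atTop (𝓝 1) := by
    simpa using tendsto_const_nhds.add (tendsto_one_div_add_atTop_nhds_zero_nat (𝕜 := ℝ))
  exact h0.congr (fun n => by field_simp; ring)

lemma tendstoB (α : ℂ) : Tendsto (fun n : ℕ => ‖α + (n:ℂ)‖/((n:ℝ)+1)) atTop (𝓝 1) := by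
  have hb1 : Tendsto (fun n:ℕ => (α - 1)/((n:ℂ)+1)) atTop (𝓝 0) := by
    rw [tendsto_zero_iff_norm_tendsto_zero]
    have he : ∀ n:ℕ, ‖α-1‖ * (1/((n:ℝ)+1)) = ‖(α-1)/((n:ℂ)+1)‖ := by
      intro n
      have h2 : ((n:ℂ)+1) = ((n+1:ℕ):ℂ) := by push_cast; ring
      rw [norm_div, h2, Complex.norm_natCast]
      push_cast; ring
    have h3 := tendsto_one_div_add_atTop_nhds_zero_nat.const_mul ‖α-1‖
    rw [mul_zero] at h3
    exact h3.congr he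
  have hb2 : Tendsto (fun n:ℕ => (α - 1)/((n:ℂ)+1) + 1) atTop (𝓝 1) := by
    simpa using hb1.add tendsto_const_nhds
  have hb3 := hb2.norm
  rw [norm_one] at hb3
  apply hb3.congr
  intro n
  have hne : ((n:ℂ)+1) ≠ 0 := Nat.cast_add_one_ne_zero n
  have he2 : (α - 1)/((n:ℂ)+1) + 1 = (α + n)/((n:ℂ)+1) := by field_simp; ring
  rw [he2, norm_div]
  have h2 : ((n:ℂ)+1) = ((n+1:ℕ):ℂ) := by push_cast; ring
  rw [h2, Complex.norm_natCast]
  push_cast; ring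

variable {α : ℂ} {D : ℝ}

lemma summable_MM (hα : ∀ m : ℕ, α ≠ -(m : ℂ)) (hD1 : 1 ≤ D) (j k : ℕ) {r : ℝ}
    (hr0 : 0 < r) (hr1 : r < 1) :
    Summable (fun n : ℕ => ((n:ℝ)+1)^j * MM α D k n * r^n) := by
  set f : ℕ → ℝ := fun n : ℕ => ((n:ℝ)+1)^j * MM α D k n * r^n with hf
  have hfpos : ∀ n, 0 < f n := fun n => by
    have h1 := MM_pos hα hD1 k n
    have h2 : (0:ℝ) < ((n:ℝ)+1) := by positivity
    simp only [hf]
    positivity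
  set c : ℕ → ℝ := fun n => (((n:ℝ)+2)/((n:ℝ)+1))^(j+k) * (‖α + (n:ℂ)‖/((n:ℝ)+1)) * r with hc
  have hfc : ∀ n, f (n+1) = c n * f n := by
    intro n
    have hfact : (((n+1).factorial : ℕ) : ℝ) = ((n:ℝ)+1) * (n.factorial : ℝ) := by
      rw [Nat.factorial_succ]; push_cast; ring
    have hpoch : ‖poch α (n+1)‖ = ‖poch α n‖ * ‖α + n‖ := by rw [poch_succ, norm_mul]
    have h1 : ((n:ℝ)) + 1 ≠ 0 := by positivity
    have h2 : ((n.factorial : ℕ) : ℝ) ≠ 0 := by positivity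
    have key : ((1:ℝ)+(n:ℝ))^k * ((n:ℝ)*D+D*2)^k = (2+(n:ℝ))^k * ((n:ℝ)*D+D)^k := by
      rw [← mul_pow, ← mul_pow]; congr 1; ring
    simp only [hf, hc, MM]
    rw [hfact, hpoch]
    push_cast
    rw [div_pow]
    field_simp
    linear_combination ‖poch α n‖ * ‖α+(n:ℂ)‖ * r * r^n * (1+(n:ℝ))^j * (2+(n:ℝ))^j * key
  have hC : Tendsto c atTop (𝓝 r) := by
    have := ((tendstoA.pow (j+k)).mul (tendstoB α)).mul_const r
    simpa using this
  apply summable_of_ratio_test_tendsto_lt_one hr1 (Filter.Eventually.of_forall fun n => (hfpos n).ne')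
  apply hC.congr
  intro n
  rw [Real.norm_of_nonneg (hfpos (n+1)).le, Real.norm_of_nonneg (hfpos n).le, hfc n,
      mul_div_assoc, div_self (hfpos n).ne', mul_one]

noncomputable def gg (α : ℂ) (k : ℕ) (x : ℝ) : ℂ := ∑' n : ℕ, aa α k n * (x:ℂ)^n

lemma norm_ofReal_pow (x : ℝ) (n : ℕ) : ‖((x:ℂ))^n‖ = |x|^n := by
  rw [norm_pow, Complex.norm_real, Real.norm_eq_abs]

lemma norm_natCast_add_one (n : ℕ) : ‖(n:ℂ)+1‖ = (n:ℝ)+1 := by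
  have h2 : ((n:ℂ)+1) = ((n+1:ℕ):ℂ) := by push_cast; ring
  rw [h2, Complex.norm_natCast]; push_cast; ring

lemma sum_aa (hα : ∀ m : ℕ, α ≠ -(m : ℂ)) (hD1 : 1 ≤ D)
    (hD : ∀ n : ℕ, ‖1 / ((n : ℂ) + α - 1)‖ ≤ D) (k : ℕ) {x : ℝ} (hx : |x| < 1) :
    Summable (fun n : ℕ => aa α k n * (x:ℂ)^n) := by
  have hx0 := abs_nonneg x
  set r : ℝ := (1+|x|)/2 with hr
  have hxr : |x| ≤ r := by rw [hr]; linarith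
  have hr0 : (0:ℝ) < r := by rw [hr]; linarith
  have hr1 : r < 1 := by rw [hr]; linarith
  have hs := summable_MM hα hD1 0 k hr0 hr1
  simp only [pow_zero, one_mul] at hs
  apply Summable.of_norm_bounded hs
  intro n
  rw [norm_mul, norm_ofReal_pow]
  exact mul_le_mul (aa_norm_le hD1 hD k n) (pow_le_pow_left₀ hx0 hxr n)
    (by positivity) (MM_pos hα hD1 k n).le

lemma sum_deriv (hα : ∀ m : ℕ, α ≠ -(m : ℂ)) (hD1 : 1 ≤ D)
    (hD : ∀ n : ℕ, ‖1 / ((n : ℂ) + α - 1)‖ ≤ D) (k : ℕ) {x : ℝ} (hx : |x| < 1) :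
    Summable (fun n : ℕ => ((n:ℂ)+1) * aa α k (n+1) * (x:ℂ)^n) := by
  have hx0 := abs_nonneg x
  set r : ℝ := (1+|x|)/2 with hr
  have hxr : |x| ≤ r := by rw [hr]; linarith
  have hr0 : (0:ℝ) < r := by rw [hr]; linarith
  have hr1 : r < 1 := by rw [hr]; linarith
  have hs := (summable_MM hα hD1 1 k hr0 hr1).mul_left ((1 + ‖α‖) * 2^k)
  apply Summable.of_norm_bounded hs
  intro n
  have e1 : ‖((n:ℂ)+1) * aa α k (n+1) * (x:ℂ)^n‖ = ((n:ℝ)+1) * ‖aa α k (n+1)‖ * |x|^n := by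
    rw [norm_mul, norm_mul, norm_ofReal_pow, norm_natCast_add_one]
  rw [e1]
  have b1 : ‖aa α k (n+1)‖ ≤ ((1 + ‖α‖) * 2^k) * MM α D k n :=
    (aa_norm_le hD1 hD k (n+1)).trans (MM_succ_le hD1 k n)
  calc ((n:ℝ)+1) * ‖aa α k (n+1)‖ * |x|^n
      ≤ ((n:ℝ)+1) * (((1 + ‖α‖) * 2^k) * MM α D k n) * r^n := by
        have hna : (0:ℝ) ≤ (n:ℝ)+1 := by positivity
        apply mul_le_mul (mul_le_mul_of_nonneg_left b1 hna) (pow_le_pow_left₀ hx0 hxr n)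
          (by positivity) ?_
        have := (MM_pos hα hD1 k n).le
        positivity
    _ = ((1 + ‖α‖) * 2^k) * (((n:ℝ)+1)^1 * MM α D k n * r^n) := by ring

lemma sum_nmul (hα : ∀ m : ℕ, α ≠ -(m : ℂ)) (hD1 : 1 ≤ D)
    (hD : ∀ n : ℕ, ‖1 / ((n : ℂ) + α - 1)‖ ≤ D) (k : ℕ) {x : ℝ} (hx : |x| < 1) :
    Summable (fun n : ℕ => (n:ℂ) * aa α k n * (x:ℂ)^n) := by
  have hx0 := abs_nonneg x
  set r : ℝ := (1+|x|)/2 with hr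
  have hxr : |x| ≤ r := by rw [hr]; linarith
  have hr0 : (0:ℝ) < r := by rw [hr]; linarith
  have hr1 : r < 1 := by rw [hr]; linarith
  have hs := summable_MM hα hD1 1 k hr0 hr1
  apply Summable.of_norm_bounded hs
  intro n
  have e1 : ‖(n:ℂ) * aa α k n * (x:ℂ)^n‖ = (n:ℝ) * ‖aa α k n‖ * |x|^n := by
    rw [norm_mul, norm_mul, norm_ofReal_pow, Complex.norm_natCast]
  rw [e1]
  have hM := (MM_pos hα hD1 k n).le
  calc (n:ℝ) * ‖aa α k n‖ * |x|^n
      ≤ ((n:ℝ)+1) * MM α D k n * r^n := by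
        apply mul_le_mul (mul_le_mul (by linarith [Nat.cast_nonneg (α := ℝ) n])
          (aa_norm_le hD1 hD k n) (norm_nonneg _) (by positivity))
          (pow_le_pow_left₀ hx0 hxr n) (by positivity) (by positivity)
    _ = ((n:ℝ)+1)^1 * MM α D k n * r^n := by ring

lemma gg_hasDerivAt (hα : ∀ m : ℕ, α ≠ -(m : ℂ)) (hD1 : 1 ≤ D)
    (hD : ∀ n : ℕ, ‖1 / ((n : ℂ) + α - 1)‖ ≤ D) (k : ℕ) {x : ℝ} (hx : |x| < 1) :
    HasDerivAt (gg α k) (∑' n : ℕ, ((n:ℂ)+1) * aa α k (n+1) * (x:ℂ)^n) x := by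
  have hx0 := abs_nonneg x
  set r : ℝ := (1+|x|)/2 with hr
  have hxr : |x| < r := by rw [hr]; linarith
  have hr0 : (0:ℝ) < r := by rw [hr]; linarith
  have hr1 : r < 1 := by rw [hr]; linarith
  set K : ℝ := (1 + ‖α‖) * 2^k with hK
  have hK0 : 0 ≤ K := by rw [hK]; positivity
  set u : ℕ → ℝ := fun n => (n:ℝ) * MM α D k n * r^(n-1) with hu
  have husum : Summable u := by
    rw [← summable_nat_add_iff 1]
    have hs := (summable_MM hα hD1 1 k hr0 hr1).mul_left K
    apply Summable.of_nonneg_of_le (fun n => ?_) (fun n => ?_) hs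
    · have := (MM_pos hα hD1 k (n+1)).le
      simp only [hu]
      positivity
    · simp only [hu, Nat.add_sub_cancel]
      have b1 : MM α D k (n+1) ≤ K * MM α D k n := MM_succ_le hD1 k n
      calc ((n+1:ℕ):ℝ) * MM α D k (n+1) * r^n
          ≤ ((n+1:ℕ):ℝ) * (K * MM α D k n) * r^n := by
            apply mul_le_mul_of_nonneg_right (mul_le_mul_of_nonneg_left b1 (by positivity))
              (by positivity)
        _ = K * (((n:ℝ)+1)^1 * MM α D k n * r^n) := by push_cast; ring
  have key := hasDerivAt_tsum_of_isPreconnected husum isOpen_Ioo isPreconnected_Ioo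
    (g := fun (n : ℕ) (z : ℝ) => aa α k n * (z:ℂ)^n)
    (g' := fun (n : ℕ) (y : ℝ) => aa α k n * ((n:ℂ) * (y:ℂ)^(n-1)))
    (fun n y _ => ((hasDerivAt_pow n (y:ℂ)).comp_ofReal).const_mul (aa α k n))
    (fun n y hy => ?_) (Set.mem_Ioo.mpr ⟨by linarith, hr0⟩)
    (sum_aa hα hD1 hD k (by simp : |(0:ℝ)| < 1)) (Set.mem_Ioo.mpr (abs_lt.mp hxr))
  · have e0 : gg α k = fun z : ℝ => ∑' n : ℕ, aa α k n * (z:ℂ)^n := rfl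
    rw [e0]
    refine key.congr_deriv ?_
    have hsum' : Summable (fun n : ℕ => aa α k n * ((n:ℂ) * (x:ℂ)^(n-1))) := by
      apply Summable.of_norm_bounded husum
      intro n
      have hb : ‖aa α k n * ((n:ℂ) * (x:ℂ)^(n-1))‖ = ‖aa α k n‖ * ((n:ℝ) * |x|^(n-1)) := by
        rw [norm_mul, norm_mul, norm_ofReal_pow, Complex.norm_natCast]
      rw [hb, hu]
      have := (MM_pos hα hD1 k n).le
      calc ‖aa α k n‖ * ((n:ℝ) * |x|^(n-1))
          ≤ MM α D k n * ((n:ℝ) * r^(n-1)) := by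
            apply mul_le_mul (aa_norm_le hD1 hD k n)
              (mul_le_mul_of_nonneg_left (pow_le_pow_left₀ hx0 hxr.le _) (by positivity))
              (by positivity) this
        _ = (n:ℝ) * MM α D k n * r^(n-1) := by ring
    rw [Summable.tsum_eq_zero_add hsum']
    simp only [Nat.cast_zero, zero_mul, mul_zero, zero_add, Nat.add_sub_cancel]
    apply tsum_congr
    intro n
    push_cast
    ring
  · have hy' : |y| ≤ r := by
      rw [abs_le]
      exact ⟨(Set.mem_Ioo.mp hy).1.le, (Set.mem_Ioo.mp hy).2.le⟩
    have hb : ‖aa α k n * ((n:ℂ) * (y:ℂ)^(n-1))‖ = ‖aa α k n‖ * ((n:ℝ) * |y|^(n-1)) := by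
      rw [norm_mul, norm_mul, norm_ofReal_pow, Complex.norm_natCast]
    rw [hb, hu]
    have := (MM_pos hα hD1 k n).le
    calc ‖aa α k n‖ * ((n:ℝ) * |y|^(n-1))
        ≤ MM α D k n * ((n:ℝ) * r^(n-1)) := by
          apply mul_le_mul (aa_norm_le hD1 hD k n)
            (mul_le_mul_of_nonneg_left (pow_le_pow_left₀ (abs_nonneg y) hy' _) (by positivity))
            (by positivity) this
      _ = (n:ℝ) * MM α D k n * r^(n-1) := by ring

lemma tsum_ode (α : ℂ) (x : ℝ) (c w : ℕ → ℂ)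
    (hrec : ∀ n : ℕ, ((n:ℂ)+1) * c (n+1) = (α + n) * c n + w n)
    (S1 : Summable fun n : ℕ => c n * (x:ℂ)^n)
    (S2 : Summable fun n : ℕ => ((n:ℂ)+1) * c (n+1) * (x:ℂ)^n)
    (S2' : Summable fun n : ℕ => (n:ℂ) * c n * (x:ℂ)^n)
    (S3 : Summable fun n : ℕ => w n * (x:ℂ)^n) :
    (1 - (x:ℂ)) * ∑' n : ℕ, ((n:ℂ)+1) * c (n+1) * (x:ℂ)^n
      = α * ∑' n : ℕ, c n * (x:ℂ)^n + ∑' n : ℕ, w n * (x:ℂ)^n := by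
  have E1 : ∑' n : ℕ, ((n:ℂ)+1) * c (n+1) * (x:ℂ)^n
      = α * (∑' n : ℕ, c n * (x:ℂ)^n) + (∑' n : ℕ, (n:ℂ) * c n * (x:ℂ)^n)
        + ∑' n : ℕ, w n * (x:ℂ)^n := by
    have e : ∀ n : ℕ, ((n:ℂ)+1) * c (n+1) * (x:ℂ)^n
        = (α * (c n * (x:ℂ)^n) + (n:ℂ) * c n * (x:ℂ)^n) + w n * (x:ℂ)^n := by
      intro n
      linear_combination ((x:ℂ)^n) * hrec n
    rw [tsum_congr e, Summable.tsum_add ((S1.mul_left α).add S2') S3,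
      Summable.tsum_add (S1.mul_left α) S2', tsum_mul_left]
  have E2 : (x:ℂ) * ∑' n : ℕ, ((n:ℂ)+1) * c (n+1) * (x:ℂ)^n
      = ∑' n : ℕ, ((n:ℂ)+1) * c (n+1) * (x:ℂ)^(n+1) := by
    rw [← tsum_mul_left]
    exact tsum_congr fun n => by ring
  have E3 : ∑' n : ℕ, (n:ℂ) * c n * (x:ℂ)^n
      = ∑' n : ℕ, ((n:ℂ)+1) * c (n+1) * (x:ℂ)^(n+1) := by
    rw [Summable.tsum_eq_zero_add S2']
    simp only [Nat.cast_zero, zero_mul, zero_add]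
    exact tsum_congr fun n => by push_cast; ring
  rw [sub_mul, one_mul, E2, E1, E3]
  ring

lemma aa_rec_zero (n : ℕ) : ((n:ℂ)+1) * aa α 0 (n+1) = (α + n) * aa α 0 n := by
  rw [aa, aa, hmhs_zero, hmhs_zero, poch_succ]
  have h1 : (((n+1).factorial : ℕ) : ℂ) = ((n:ℂ)+1) * ((n.factorial : ℕ) : ℂ) := by
    rw [Nat.factorial_succ]; push_cast; ring
  have h2 : ((n:ℂ)+1) ≠ 0 := Nat.cast_add_one_ne_zero n
  have h3 : ((n.factorial:ℕ):ℂ) ≠ 0 := Nat.cast_ne_zero.mpr n.factorial_ne_zero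
  rw [h1]
  field_simp

lemma aa_rec_succ (hα : ∀ m : ℕ, α ≠ -(m : ℂ)) (k n : ℕ) :
    ((n:ℂ)+1) * aa α (k+1) (n+1) = (α + n) * aa α (k+1) n + aa α k n := by
  rw [aa, aa, aa, hmhs_rec, poch_succ]
  have hden : (((n+1:ℕ):ℂ) + α - 1) = α + n := by push_cast; ring
  rw [hden]
  have h1 : (((n+1).factorial : ℕ) : ℂ) = ((n:ℂ)+1) * ((n.factorial : ℕ) : ℂ) := by
    rw [Nat.factorial_succ]; push_cast; ring
  have h2 : ((n:ℂ)+1) ≠ 0 := Nat.cast_add_one_ne_zero n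
  have h3 : ((n.factorial:ℕ):ℂ) ≠ 0 := Nat.cast_ne_zero.mpr n.factorial_ne_zero
  have h4 : α + (n:ℂ) ≠ 0 := alpha_add_ne hα n
  rw [h1]
  field_simp

lemma gg_ode_zero (hα : ∀ m : ℕ, α ≠ -(m : ℂ)) (hD1 : 1 ≤ D)
    (hD : ∀ n : ℕ, ‖1 / ((n : ℂ) + α - 1)‖ ≤ D) {x : ℝ} (hx : |x| < 1) :
    (1 - (x:ℂ)) * (∑' n : ℕ, ((n:ℂ)+1) * aa α 0 (n+1) * (x:ℂ)^n) = α * gg α 0 x := by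
  have h := tsum_ode α x (aa α 0) (fun _ => 0)
    (fun n => by rw [add_zero]; exact aa_rec_zero n)
    (sum_aa hα hD1 hD 0 hx) (sum_deriv hα hD1 hD 0 hx) (sum_nmul hα hD1 hD 0 hx)
    (by simpa using summable_zero)
  simpa [gg] using h

lemma gg_ode_succ (hα : ∀ m : ℕ, α ≠ -(m : ℂ)) (hD1 : 1 ≤ D)
    (hD : ∀ n : ℕ, ‖1 / ((n : ℂ) + α - 1)‖ ≤ D) (k : ℕ) {x : ℝ} (hx : |x| < 1) :
    (1 - (x:ℂ)) * (∑' n : ℕ, ((n:ℂ)+1) * aa α (k+1) (n+1) * (x:ℂ)^n)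
      = α * gg α (k+1) x + gg α k x := by
  exact tsum_ode α x (aa α (k+1)) (aa α k) (aa_rec_succ hα k)
    (sum_aa hα hD1 hD (k+1) hx) (sum_deriv hα hD1 hD (k+1) hx) (sum_nmul hα hD1 hD (k+1) hx)
    (sum_aa hα hD1 hD k hx)

noncomputable def GG (α : ℂ) (k : ℕ) (x : ℝ) : ℂ :=
  ((-1:ℂ)^k / (k.factorial:ℂ)) * (Complex.log (1-(x:ℂ)))^k
    * Complex.exp (-(α * Complex.log (1-(x:ℂ))))

lemma one_sub_ne {x : ℝ} (hx : x ∈ Ioo (-1:ℝ) 1) : (1 - (x:ℂ)) ≠ 0 := by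
  intro h
  have h2 : (1:ℂ) = (x:ℂ) := by linear_combination h
  have h3 : (1:ℝ) = x := by exact_mod_cast h2
  exact hx.2.ne h3.symm

lemma log_hasDerivAt {x : ℝ} (hx : x ∈ Ioo (-1:ℝ) 1) :
    HasDerivAt (fun y:ℝ => Complex.log (1-(y:ℂ))) (-(1-(x:ℂ))⁻¹) x := by
  have h1 : HasDerivAt (fun z:ℂ => 1 - z) (-1) (x:ℂ) := by
    simpa using (hasDerivAt_id (x:ℂ)).const_sub 1
  have hmem : (1 - (x:ℂ)) ∈ Complex.slitPlane := by
    refine Complex.mem_slitPlane_iff.mpr (Or.inl ?_)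
    have : (1 - (x:ℂ)).re = 1 - x := by simp
    rw [this]
    linarith [hx.2]
  have h2 := (Complex.hasDerivAt_log hmem).comp (x:ℂ) h1
  have h3 := h2.comp_ofReal
  simpa [mul_comm] using h3

lemma GG_hasDerivAt (α : ℂ) (k : ℕ) {x : ℝ} (hx : x ∈ Ioo (-1:ℝ) 1) :
    HasDerivAt (GG α k)
      (((-1:ℂ)^k / (k.factorial:ℂ)) *
        (((k:ℂ) * (Complex.log (1-(x:ℂ)))^(k-1) * (-(1-(x:ℂ))⁻¹))
            * Complex.exp (-(α * Complex.log (1-(x:ℂ))))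
          + (Complex.log (1-(x:ℂ)))^k
            * (Complex.exp (-(α * Complex.log (1-(x:ℂ)))) * (-(α * (-(1-(x:ℂ))⁻¹)))))) x := by
  have hl := log_hasDerivAt hx
  have hpow : HasDerivAt (fun y:ℝ => (Complex.log (1-(y:ℂ)))^k)
      ((k:ℂ) * (Complex.log (1-(x:ℂ)))^(k-1) * (-(1-(x:ℂ))⁻¹)) x := by
    exact
      (hasDerivAt_pow k (Complex.log (1-(x:ℂ)))).comp x hl
  have hexp := ((hl.const_mul α).neg).cexp
  have hmul := hpow.mul hexp
  have final := hmul.const_mul ((-1:ℂ)^k / (k.factorial:ℂ))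
  have e : GG α k = fun y : ℝ =>
      ((-1:ℂ)^k / (k.factorial:ℂ)) *
        ((Complex.log (1-(y:ℂ)))^k * Complex.exp (-(α * Complex.log (1-(y:ℂ))))) := by
    funext y; rw [GG]; ring
  rw [e]
  exact final

lemma GG_ode_zero (α : ℂ) {x : ℝ} (hx : x ∈ Ioo (-1:ℝ) 1) :
    ∃ d, HasDerivAt (GG α 0) d x ∧ (1-(x:ℂ)) * d = α * GG α 0 x := by
  refine ⟨_, GG_hasDerivAt α 0 hx, ?_⟩
  have hone := one_sub_ne hx
  rw [GG]
  field_simp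
  ring

lemma GG_ode_succ (α : ℂ) (k : ℕ) {x : ℝ} (hx : x ∈ Ioo (-1:ℝ) 1) :
    ∃ d, HasDerivAt (GG α (k+1)) d x ∧
      (1-(x:ℂ)) * d = α * GG α (k+1) x + GG α k x := by
  refine ⟨_, GG_hasDerivAt α (k+1) hx, ?_⟩
  have hone := one_sub_ne hx
  have h5 : (((k+1).factorial : ℕ) : ℂ) = ((k:ℂ)+1) * ((k.factorial : ℕ) : ℂ) := by
    rw [Nat.factorial_succ]; push_cast; ring
  have h3 : ((k.factorial:ℕ):ℂ) ≠ 0 := Nat.cast_ne_zero.mpr k.factorial_ne_zero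
  have h2 : ((k:ℂ)+1) ≠ 0 := Nat.cast_add_one_ne_zero k
  rw [GG, GG, h5]
  simp only [Nat.add_sub_cancel]
  push_cast
  field_simp
  ring

lemma ode_unique (α : ℂ) (h : ℝ → ℂ)
    (hd : ∀ x ∈ Ioo (-1:ℝ) 1, ∃ d, HasDerivAt h d x ∧ (1-(x:ℂ)) * d = α * h x)
    (h0 : h 0 = 0) : ∀ x ∈ Ioo (-1:ℝ) 1, h x = 0 := by
  set φ : ℝ → ℂ := fun y => h y * Complex.exp (α * Complex.log (1-(y:ℂ))) with hφ
  have hderiv : ∀ x ∈ Ioo (-1:ℝ) 1, HasDerivAt φ 0 x := by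
    intro x hx
    obtain ⟨d, hd1, hd2⟩ := hd x hx
    have hl := log_hasDerivAt hx
    have he := (hl.const_mul α).cexp
    have hm := hd1.mul he
    have hone := one_sub_ne hx
    refine hm.congr_deriv ?_
    have hd' : d = α * h x * (1-(x:ℂ))⁻¹ := by
      field_simp
      linear_combination hd2
    rw [hd']
    have hexp := Complex.exp_ne_zero (α * Complex.log (1-(x:ℂ)))
    field_simp
    ring
  have hconst : ∀ x ∈ Ioo (-1:ℝ) 1, φ x = φ 0 := by
    intro x hx
    have h0mem : (0:ℝ) ∈ Ioo (-1:ℝ) 1 := by constructor <;> norm_num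
    apply (convex_Ioo (-1:ℝ) 1).is_const_of_fderivWithin_eq_zero
      (fun y hy => (hderiv y hy).differentiableAt.differentiableWithinAt) ?_ hx h0mem
    intro y hy
    rw [fderivWithin_of_isOpen isOpen_Ioo hy, (hderiv y hy).hasFDerivAt.fderiv]
    ext t
    simp
  intro x hx
  have hc := hconst x hx
  have hφ0 : φ 0 = 0 := by
    simp only [hφ, h0, zero_mul]
  rw [hφ0] at hc
  have hexp := Complex.exp_ne_zero (α * Complex.log (1-(x:ℂ)))
  exact (mul_eq_zero.mp hc).resolve_right hexp

lemma gg_zero_val (α : ℂ) (k : ℕ) : gg α k 0 = hmhs α 0 k := by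
  rw [gg]
  rw [tsum_eq_single 0 (fun n hn => ?_)]
  · rw [aa]
    have : poch α 0 = 1 := Finset.prod_range_zero _
    simp [this]
  · simp [zero_pow hn]

lemma GG_eq_gg (hα : ∀ m : ℕ, α ≠ -(m : ℂ)) (hD1 : 1 ≤ D)
    (hD : ∀ n : ℕ, ‖1 / ((n : ℂ) + α - 1)‖ ≤ D) :
    ∀ k, ∀ x ∈ Ioo (-1:ℝ) 1, GG α k x = gg α k x := by
  intro k
  induction k with
  | zero =>
    intro x hx
    have key := ode_unique α (fun y => GG α 0 y - gg α 0 y) (fun y hy => ?_) ?_ x hx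
    · exact sub_eq_zero.mp key
    · obtain ⟨d, hdG, hrel⟩ := GG_ode_zero α hy
      have hy' : |y| < 1 := abs_lt.mpr ⟨hy.1, hy.2⟩
      have hgd := gg_hasDerivAt hα hD1 hD 0 hy'
      refine ⟨d - _, hdG.sub hgd, ?_⟩
      rw [mul_sub, hrel, gg_ode_zero hα hD1 hD hy']
      ring
    · have hG0 : GG α 0 0 = 1 := by
        rw [GG]
        simp
      show GG α 0 0 - gg α 0 0 = 0
      rw [hG0, gg_zero_val, hmhs_zero]
      ring
  | succ k ih =>
    intro x hx
    have key := ode_unique α (fun y => GG α (k+1) y - gg α (k+1) y) (fun y hy => ?_) ?_ x hx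
    · exact sub_eq_zero.mp key
    · obtain ⟨d, hdG, hrel⟩ := GG_ode_succ α k hy
      have hy' : |y| < 1 := abs_lt.mpr ⟨hy.1, hy.2⟩
      have hgd := gg_hasDerivAt hα hD1 hD (k+1) hy'
      refine ⟨d - _, hdG.sub hgd, ?_⟩
      rw [mul_sub, hrel, gg_ode_succ hα hD1 hD k hy', ih y hy]
      ring
    · have hG0 : GG α (k+1) 0 = 0 := by
        rw [GG]
        simp
      show GG α (k+1) 0 - gg α (k+1) 0 = 0
      rw [hG0, gg_zero_val, hmhs_zero_succ]
      ring

end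

theorem log_pow_div_pow_series (k : ℕ) (hk : 1 ≤ k) (α : ℂ)
    (hα : ∀ m : ℕ, α ≠ -(m : ℂ)) (x : ℝ) (hx : |x| < 1) :
    ((-1 : ℂ) ^ k / (k.factorial : ℂ)) * (Complex.log (1 - (x : ℂ))) ^ k / ((1 - (x : ℂ)) ^ α) =
      ∑' n : ℕ, (poch α (n + 1) / ((n + 1).factorial : ℂ)) * hmhs α (n + 1) k * (x : ℂ) ^ (n + 1) := by
  obtain ⟨D, hD1, hD⟩ := exists_D α
  have hx' : x ∈ Ioo (-1:ℝ) 1 := Set.mem_Ioo.mpr (abs_lt.mp hx)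
  have hone := one_sub_ne hx'
  have hL : ((1 - (x:ℂ)) ^ α) = Complex.exp (Complex.log (1-(x:ℂ)) * α) :=
    Complex.cpow_def_of_ne_zero hone α
  have lhs_eq : ((-1 : ℂ) ^ k / (k.factorial : ℂ)) * (Complex.log (1 - (x : ℂ))) ^ k
      / ((1 - (x : ℂ)) ^ α) = GG α k x := by
    rw [hL, GG, div_eq_mul_inv, ← Complex.exp_neg]
    have h2 : -(Complex.log (1-(x:ℂ)) * α) = -(α * Complex.log (1-(x:ℂ))) := by ring
    rw [h2]
  rw [lhs_eq, GG_eq_gg hα hD1 hD k x hx']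
  obtain ⟨k', rfl⟩ : ∃ k', k = k' + 1 := ⟨k-1, (Nat.succ_pred_eq_of_pos hk).symm⟩
  rw [gg, Summable.tsum_eq_zero_add (sum_aa hα hD1 hD (k'+1) hx)]
  have h0 : aa α (k'+1) 0 * ((x:ℝ):ℂ)^0 = 0 := by
    rw [aa, hmhs_zero_succ]; ring
  rw [h0, zero_add]
  exact tsum_congr (fun n => rfl)
end

section
/- For nonnegative integers k and positive integer n and complex α with Re(α) < 1, the k-th derivative of the reciprocal binomial coefficient satisfies (d^k/dα^k) [1/C(n-α, n)] = k! · ζ_n^⋆({1}_k; 1-α) / C(n-α, n), where C(n-α,n) = Γ(n-α+1)/(Γ(n+1)Γ(1-α)) and ζ_n^⋆({1}_k; 1-α) = Σ_{n ≥ n_1 ≥ ... ≥ n_k ≥ 1} Π_j 1/(n_j - α). -/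
/-- Generalized binomial coefficient `C(a,b) = Γ(a+1)/(Γ(b+1)Γ(a-b+1))`. -/
noncomputable def cbinom (a b : ℂ) : ℂ :=
  Complex.Gamma (a + 1) / (Complex.Gamma (b + 1) * Complex.Gamma (a - b + 1))

/-- Power sum `Σ_{j=1}^n 1/(j+a-1)^s`. -/
noncomputable def psum (a : ℂ) (n s : ℕ) : ℂ := ∑ j ∈ Finset.Icc 1 n, (1 / ((j : ℂ) + a - 1)) ^ s

lemma hmhsStar_zero (a : ℂ) (n : ℕ) : hmhsStar a n 0 = 1 := by rw [hmhsStar]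

lemma hmhsStar_succ' (α : ℂ) (n k : ℕ) :
    hmhsStar (1-α) n (k+1) = ∑ j ∈ Finset.Icc 1 n, ((j : ℂ) - α)⁻¹ * hmhsStar (1-α) j k := by
  rw [hmhsStar]
  refine Finset.sum_congr rfl fun j hj => ?_
  rw [one_div]
  congr 1
  congr 1
  ring

lemma sub_ne (α : ℂ) (hα : α.re < 1) {j : ℕ} (hj : 1 ≤ j) : (j : ℂ) - α ≠ 0 := by
  intro h
  have h2 := congrArg Complex.re h
  simp [Complex.sub_re] at h2
  have h3 : (1:ℝ) ≤ (j:ℝ) := by exact_mod_cast hj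
  linarith

lemma hasDerivAt_T : ∀ (k n : ℕ) (α : ℂ), α.re < 1 →
    HasDerivAt (fun a => hmhsStar (1-a) n k)
      ((k+1 : ℂ) * hmhsStar (1-α) n (k+1)
        - (∑ j ∈ Finset.Icc 1 n, ((j:ℂ)-α)⁻¹) * hmhsStar (1-α) n k) α := by
  intro k
  induction k with
  | zero =>
    intro n α hα
    have h0 : HasDerivAt (fun a : ℂ => hmhsStar (1-a) n 0) 0 α := by
      simp only [hmhsStar_zero]
      exact hasDerivAt_const α 1
    convert h0 using 1
    rw [hmhsStar_succ']
    simp only [hmhsStar_zero, mul_one]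
    ring
  | succ k ih =>
    intro n α hα
    have hfun : (fun a => hmhsStar (1-a) n (k+1))
        = fun a => ∑ j ∈ Finset.Icc 1 n, ((j:ℂ)-a)⁻¹ * hmhsStar (1-a) j k :=
      funext fun a => hmhsStar_succ' a n k
    rw [hfun]
    -- derivative of each summand
    have hterm : ∀ j ∈ Finset.Icc 1 n,
        HasDerivAt (fun a => ((j:ℂ)-a)⁻¹ * hmhsStar (1-a) j k)
          ((((j:ℂ)-α)^2)⁻¹ * hmhsStar (1-α) j k
            + ((j:ℂ)-α)⁻¹ * ((k+1 : ℂ) * hmhsStar (1-α) j (k+1)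
                - (∑ i ∈ Finset.Icc 1 j, ((i:ℂ)-α)⁻¹) * hmhsStar (1-α) j k)) α := by
      intro j hj
      obtain ⟨hj1, hj2⟩ := Finset.mem_Icc.mp hj
      have h1 : HasDerivAt (fun a : ℂ => (j:ℂ) - a) (-1) α := by
        simpa using (hasDerivAt_id α).const_sub ((j:ℂ))
      have h2 : HasDerivAt (fun a : ℂ => ((j:ℂ)-a)⁻¹) ((((j:ℂ)-α)^2)⁻¹) α := by
        have := h1.fun_inv (sub_ne α hα hj1)
        refine this.congr_deriv (Eq.symm ?_)
        field_simp
      exact h2.mul (ih j α hα)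
    have hsum := HasDerivAt.fun_sum hterm
    have e1 : ∀ j ∈ Finset.Icc 1 n,
        ((j:ℂ)-α)⁻¹ + (∑ i ∈ Finset.Icc 1 n, ((i:ℂ)-α)⁻¹)
          - (∑ i ∈ Finset.Icc 1 j, ((i:ℂ)-α)⁻¹)
          = ∑ i ∈ Finset.Icc j n, ((i:ℂ)-α)⁻¹ := by
      intro j hj
      obtain ⟨hj1, hj2⟩ := Finset.mem_Icc.mp hj
      have hi1 : ∀ m : ℕ, Finset.Icc 1 m = Finset.Ioc 0 m := by
        intro m; ext i; simp; omega
      have ha : ∑ i ∈ Finset.Icc 1 n, ((i:ℂ)-α)⁻¹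
          = (∑ i ∈ Finset.Icc 1 j, ((i:ℂ)-α)⁻¹) + ∑ i ∈ Finset.Ioc j n, ((i:ℂ)-α)⁻¹ := by
        rw [hi1 n, hi1 j, Finset.sum_Ioc_consecutive _ (Nat.zero_le j) hj2]
      have hb : ∑ i ∈ Finset.Icc j n, ((i:ℂ)-α)⁻¹
          = ((j:ℂ)-α)⁻¹ + ∑ i ∈ Finset.Ioc j n, ((i:ℂ)-α)⁻¹ := by
        rw [Finset.Icc_eq_cons_Ioc hj2, Finset.sum_cons]
      rw [ha, hb]; ring
    have hswap : ∑ j ∈ Finset.Icc 1 n, ((j:ℂ)-α)⁻¹ * hmhsStar (1-α) j k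
          * (∑ i ∈ Finset.Icc j n, ((i:ℂ)-α)⁻¹)
        = hmhsStar (1-α) n (k+1+1) := by
      have h1 : ∑ j ∈ Finset.Icc 1 n, ((j:ℂ)-α)⁻¹ * hmhsStar (1-α) j k
            * (∑ i ∈ Finset.Icc j n, ((i:ℂ)-α)⁻¹)
          = ∑ j ∈ Finset.Icc 1 n, ∑ i ∈ Finset.Icc j n,
              ((j:ℂ)-α)⁻¹ * hmhsStar (1-α) j k * ((i:ℂ)-α)⁻¹ := by
        simp [Finset.mul_sum]
      rw [h1]
      rw [Finset.sum_comm' (t' := Finset.Icc 1 n) (s' := fun i => Finset.Icc 1 i)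
        (by intro j i; simp only [Finset.mem_Icc]; omega)]
      rw [hmhsStar_succ' α n (k+1)]
      refine Finset.sum_congr rfl fun i hi => ?_
      rw [hmhsStar_succ' α i k, Finset.mul_sum]
      refine Finset.sum_congr rfl fun j hj => ?_
      ring
    have hterm_eq : ∀ j ∈ Finset.Icc 1 n,
        (((j:ℂ)-α)^2)⁻¹ * hmhsStar (1-α) j k
          + ((j:ℂ)-α)⁻¹ * ((k+1 : ℂ) * hmhsStar (1-α) j (k+1)
              - (∑ i ∈ Finset.Icc 1 j, ((i:ℂ)-α)⁻¹) * hmhsStar (1-α) j k)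
        = ((j:ℂ)-α)⁻¹ * hmhsStar (1-α) j k * (∑ i ∈ Finset.Icc j n, ((i:ℂ)-α)⁻¹)
          - (∑ i ∈ Finset.Icc 1 n, ((i:ℂ)-α)⁻¹) * (((j:ℂ)-α)⁻¹ * hmhsStar (1-α) j k)
          + (k+1 : ℂ) * (((j:ℂ)-α)⁻¹ * hmhsStar (1-α) j (k+1)) := by
      intro j hj
      rw [← e1 j hj]
      have hsq : (((j:ℂ)-α)^2)⁻¹ = ((j:ℂ)-α)⁻¹ * ((j:ℂ)-α)⁻¹ := by
        rw [sq, mul_inv]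
      rw [hsq]; ring
    refine hsum.congr_deriv (Eq.symm ?_)
    rw [Finset.sum_congr rfl hterm_eq, Finset.sum_add_distrib, Finset.sum_sub_distrib,
      hswap, ← Finset.mul_sum, ← Finset.mul_sum,
      ← hmhsStar_succ' α n k, ← hmhsStar_succ' α n (k+1)]
    push_cast
    ring

lemma isOpen_U : IsOpen {a : ℂ | a.re < 1} := isOpen_lt Complex.continuous_re continuous_const

lemma hasDerivAt_g (n : ℕ) (α : ℂ) (hα : α.re < 1) :
    HasDerivAt (fun a : ℂ => ∏ j ∈ Finset.Icc 1 n, ((j:ℂ)-a)⁻¹)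
      ((∑ j ∈ Finset.Icc 1 n, ((j:ℂ)-α)⁻¹) * ∏ j ∈ Finset.Icc 1 n, ((j:ℂ)-α)⁻¹) α := by
  have hterm : ∀ j ∈ Finset.Icc 1 n,
      HasDerivAt (fun a : ℂ => ((j:ℂ)-a)⁻¹) ((((j:ℂ)-α)^2)⁻¹) α := by
    intro j hj
    have h1 : HasDerivAt (fun a : ℂ => (j:ℂ) - a) (-1) α := by
      simpa using (hasDerivAt_id α).const_sub ((j:ℂ))
    have := h1.fun_inv (sub_ne α hα (Finset.mem_Icc.mp hj).1)
    refine this.congr_deriv (Eq.symm ?_)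
    field_simp
  have := HasDerivAt.fun_finset_prod hterm
  refine this.congr_deriv (Eq.symm ?_)
  rw [Finset.sum_mul]
  refine Finset.sum_congr rfl fun j hj => ?_
  have hne : (j:ℂ) - α ≠ 0 := sub_ne α hα (Finset.mem_Icc.mp hj).1
  rw [smul_eq_mul, ← Finset.prod_erase_mul _ _ hj]
  have hsq : (((j:ℂ)-α)^2)⁻¹ = ((j:ℂ)-α)⁻¹ * ((j:ℂ)-α)⁻¹ := by rw [sq, mul_inv]
  rw [hsq]
  ring

lemma iterated_g (n k : ℕ) (c : ℂ) : ∀ α : ℂ, α.re < 1 →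
    iteratedDeriv k (fun a : ℂ => c * ∏ j ∈ Finset.Icc 1 n, ((j:ℂ)-a)⁻¹) α
      = (k.factorial : ℂ) * hmhsStar (1-α) n k * (c * ∏ j ∈ Finset.Icc 1 n, ((j:ℂ)-α)⁻¹) := by
  induction k with
  | zero => intro α hα; simp [hmhsStar_zero]
  | succ k ih =>
    intro α hα
    rw [iteratedDeriv_succ]
    have hev : iteratedDeriv k (fun a : ℂ => c * ∏ j ∈ Finset.Icc 1 n, ((j:ℂ)-a)⁻¹)
        =ᶠ[nhds α] fun a => (k.factorial : ℂ) * hmhsStar (1-a) n k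
            * (c * ∏ j ∈ Finset.Icc 1 n, ((j:ℂ)-a)⁻¹) := by
      filter_upwards [isOpen_U.mem_nhds hα] with a ha using ih a ha
    rw [hev.deriv_eq]
    have hT := hasDerivAt_T k n α hα
    have hg := (hasDerivAt_g n α hα).const_mul c
    have hprod := ((hT.const_mul ((k.factorial : ℂ))).fun_mul hg)
    rw [hprod.deriv, Nat.factorial_succ]
    push_cast
    ring

lemma Gamma_add_nat (a : ℂ) (ha : 0 < a.re) (n : ℕ) :
    Complex.Gamma (a + n) = Complex.Gamma a * ∏ i ∈ Finset.range n, (a + i) := by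
  induction n with
  | zero => simp
  | succ n ih =>
    have hne : a + n ≠ 0 := by
      intro h
      have h2 := congrArg Complex.re h
      simp [Complex.add_re] at h2
      have : (0:ℝ) ≤ (n:ℝ) := Nat.cast_nonneg n
      linarith
    have e : a + ((n:ℕ)+1 : ℕ) = (a + n) + 1 := by push_cast; ring
    rw [e, Complex.Gamma_add_one _ hne, ih, Finset.prod_range_succ]
    ring

lemma prod_shift (a : ℂ) (n : ℕ) :
    ∏ i ∈ Finset.range n, ((1:ℂ) - a + i) = ∏ j ∈ Finset.Icc 1 n, ((j:ℂ) - a) := by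
  induction n with
  | zero => simp
  | succ n ih =>
    rw [Finset.prod_range_succ, ih, Finset.prod_Icc_succ_top (Nat.succ_le_succ (Nat.zero_le n))]
    push_cast; ring

lemma inv_cbinom (n : ℕ) (a : ℂ) (ha : a.re < 1) :
    1 / cbinom ((n:ℂ) - a) n = (n.factorial : ℂ) * ∏ j ∈ Finset.Icc 1 n, ((j:ℂ)-a)⁻¹ := by
  have h1a : (0:ℝ) < (1 - a).re := by
    simp [Complex.sub_re]; linarith
  have hG : Complex.Gamma (1-a) ≠ 0 := by
    apply Complex.Gamma_ne_zero
    intro m h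
    have h2 := congrArg Complex.re h
    simp [Complex.sub_re, Complex.neg_re] at h2
    have : (0:ℝ) ≤ (m:ℝ) := Nat.cast_nonneg m
    linarith
  have hprod : ∏ j ∈ Finset.Icc 1 n, ((j:ℂ)-a) ≠ 0 := by
    apply Finset.prod_ne_zero_iff.mpr
    intro j hj
    exact sub_ne a ha (Finset.mem_Icc.mp hj).1
  have hfac : ((n.factorial : ℂ)) ≠ 0 := by
    exact_mod_cast Nat.factorial_ne_zero n
  unfold cbinom
  have e1 : (n:ℂ) - a + 1 = (1-a) + n := by ring
  have e2 : (n:ℂ) - a - n + 1 = 1 - a := by ring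
  rw [e1, e2, Gamma_add_nat (1-a) h1a n, Complex.Gamma_nat_eq_factorial n, prod_shift]
  have hre : ∏ j ∈ Finset.Icc 1 n, ((j:ℂ)-a)⁻¹ = (∏ j ∈ Finset.Icc 1 n, ((j:ℂ)-a))⁻¹ := by
    rw [Finset.prod_inv_distrib]
  rw [hre, one_div, inv_div]
  field_simp

theorem iteratedDeriv_inv_binom (n k : ℕ) (hn : 1 ≤ n) (α : ℂ) (hα : α.re < 1) :
    iteratedDeriv k (fun a : ℂ => 1 / cbinom ((n : ℂ) - a) (n : ℂ)) α =
      (k.factorial : ℂ) * hmhsStar (1 - α) n k / cbinom ((n : ℂ) - α) (n : ℂ) := by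
  have hev : (fun a : ℂ => 1 / cbinom ((n:ℂ) - a) n)
      =ᶠ[nhds α] fun a => (n.factorial : ℂ) * ∏ j ∈ Finset.Icc 1 n, ((j:ℂ)-a)⁻¹ := by
    filter_upwards [isOpen_U.mem_nhds hα] with a ha using inv_cbinom n a ha
  rw [Filter.EventuallyEq.iteratedDeriv_eq k hev, iterated_g n k _ α hα, ← inv_cbinom n α hα,
    mul_one_div]
end

section
/- For complex numbers α with Re(α) < 1 and β with Re(β) < 0, and the dilogarithm Li_2, integration by parts gives: ∫_0^1 Li_1(x)/(x^α (1-x)^β) dx = −(1-α) ∫_0^1 Li_2(x)/(x^α (1-x)^β) dx − β ∫_0^1 Li_2(x)/(x^{α-1} (1-x)^{β+1}) dx, where Li_1(x) = −log(1-x). -/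
/-- Dilogarithm `Li₂(x) = Σ_{n≥1} x^n/n²` (as a complex number, for real `x`). -/
noncomputable def Li2 (x : ℝ) : ℂ := ∑' n : ℕ, (x : ℂ) ^ (n + 1) / ((n : ℂ) + 1) ^ 2

open MeasureTheory Set

lemma summable_aux : Summable (fun n : ℕ => (((n:ℝ)+1)^2)⁻¹) := by
  have h := (summable_nat_add_iff (f := fun n : ℕ => (((n:ℝ))^2)⁻¹) 1).mpr
    (by simpa using Real.summable_one_div_nat_pow.mpr (le_refl 2))
  apply h.congr
  intro n; push_cast; ring

lemma li2_continuousOn : ContinuousOn Li2 (Set.Icc (-1:ℝ) 1) := by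
  apply continuousOn_tsum (u := fun n : ℕ => (((n:ℝ)+1)^2)⁻¹)
  · intro n
    exact ((Complex.continuous_ofReal.pow _).div_const _).continuousOn
  · exact summable_aux
  · intro n x hx
    have hx1 : |x| ≤ 1 := abs_le.mpr ⟨hx.1, hx.2⟩
    have h1 : ‖(x:ℂ)^(n+1)‖ ≤ 1 := by
      rw [norm_pow, Complex.norm_real, Real.norm_eq_abs]
      exact pow_le_one₀ (abs_nonneg x) hx1
    have h2 : ‖((n:ℂ)+1)^2‖ = ((n:ℝ)+1)^2 := by
      rw [norm_pow, show ((n:ℂ)+1) = ((n+1:ℕ):ℂ) by push_cast; ring, Complex.norm_natCast]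
      push_cast; ring
    rw [norm_div, h2, div_eq_mul_inv]
    have h3 : (0:ℝ) < ((n:ℝ)+1)^2 := by positivity
    nlinarith [inv_pos.mpr h3]

lemma li2_hasDerivAt {x : ℝ} (hx : x ∈ Set.Ioo (0:ℝ) 1) :
    HasDerivAt Li2 (-Complex.log (1 - (x:ℂ)) / x) x := by
  obtain ⟨hx0, hx1⟩ := hx
  set r : ℝ := (1 + x)/2 with hr
  have hr0 : 0 < r := by positivity
  have hr1 : r < 1 := by simp only [hr]; linarith
  have hxr : x < r := by simp only [hr]; linarith
  have key : HasDerivAt Li2 (∑' n : ℕ, (x:ℂ)^n / ((n:ℂ)+1)) x := by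
    apply hasDerivAt_tsum_of_isPreconnected (u := fun n : ℕ => r^n)
      (g := fun (n:ℕ) (y:ℝ) => (y:ℂ)^(n+1) / ((n:ℂ)+1)^2)
      (g' := fun (n:ℕ) (y:ℝ) => (y:ℂ)^n / ((n:ℂ)+1))
      (y₀ := 0) (t := Set.Ioo (-r) r)
    · exact summable_geometric_of_lt_one hr0.le hr1
    · exact isOpen_Ioo
    · exact (convex_Ioo _ _).isPreconnected
    · intro n y _
      have h : HasDerivAt (fun y : ℝ => (y:ℂ)^(n+1)) (((n:ℂ)+1) * (y:ℂ)^n) y := by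
        have := (hasDerivAt_pow (n+1) ((y:ℝ):ℂ)).comp_ofReal
        simpa using this
      have h' := h.div_const (((n:ℂ)+1)^2)
      convert h' using 1
      · rfl
      have hn : ((n:ℂ)+1) ≠ 0 := by
        intro hcon
        have : ((n:ℝ)+1) = 0 := by exact_mod_cast congrArg Complex.re hcon
        have h0 : (0:ℝ) < (n:ℝ)+1 := by positivity
        exact h0.ne' this
      field_simp
    · intro n y hy
      rw [norm_div]
      have h1 : ‖(y:ℂ)^n‖ ≤ r^n := by
        rw [norm_pow, Complex.norm_real, Real.norm_eq_abs]
        exact pow_le_pow_left₀ (abs_nonneg y) (abs_le.mpr ⟨hy.1.le, hy.2.le⟩) n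
      have h2 : (1:ℝ) ≤ ‖((n:ℂ)+1)‖ := by
        rw [show ((n:ℂ)+1) = ((n+1:ℕ):ℂ) by push_cast; ring, Complex.norm_natCast]
        push_cast; linarith [Nat.cast_nonneg (α := ℝ) n]
      have := div_le_div₀ (pow_nonneg hr0.le n) h1 one_pos h2
      simpa using this
    · exact ⟨by linarith, by linarith⟩
    · have hz : (fun n : ℕ => ((0:ℝ):ℂ)^(n+1)/((n:ℂ)+1)^2) = fun _ => 0 := by
        funext n; simp
      rw [hz]; exact summable_zero
    · exact ⟨by linarith, hxr⟩
  convert key using 1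
  have hxn : ‖(x:ℂ)‖ < 1 := by
    rw [Complex.norm_real, Real.norm_eq_abs, abs_of_pos hx0]; exact hx1
  have hx0' : (x:ℂ) ≠ 0 := by exact_mod_cast hx0.ne'
  have h1 : HasSum (fun n : ℕ => (x:ℂ)^(n+1) / ((n:ℂ)+1)) (-Complex.log (1 - x)) := by
    have h0 := Complex.hasSum_taylorSeries_neg_log hxn
    have h2 := (hasSum_nat_add_iff' (f := fun n : ℕ => (x:ℂ)^n/(n:ℂ)) 1).mpr h0
    simp only [Finset.range_one, Finset.sum_singleton, pow_zero, Nat.cast_zero, div_zero,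
      sub_zero] at h2
    have heq : (fun n : ℕ => (x:ℂ)^(n+1)/((n:ℂ)+1)) = fun n : ℕ => (x:ℂ)^(n+1)/((n+1:ℕ):ℂ) := by
      funext n; push_cast; ring
    rw [heq]; exact h2
  have h2 : HasSum (fun n : ℕ => (x:ℂ)^n / ((n:ℂ)+1)) (-Complex.log (1 - x)/x) := by
    rw [← hasSum_mul_left_iff hx0']
    have hx2 : (x:ℂ) * (-Complex.log (1-x)/x) = -Complex.log (1-x) := by field_simp
    rw [hx2]
    have heq : (fun n : ℕ => (x:ℂ) * ((x:ℂ)^n/((n:ℂ)+1))) = fun n : ℕ => (x:ℂ)^(n+1)/((n:ℂ)+1) := by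
      funext n; rw [pow_succ]; ring
    rw [heq]; exact h1
  exact (h2.tsum_eq).symm

lemma integrableOn_aux {u v : ℂ} (hu : 0 < u.re) (hv : 0 < v.re) {φ : ℝ → ℂ} {M : ℝ}
    (hφc : ContinuousOn φ (Set.Ioo 0 1))
    (hφb : ∀ x ∈ Set.Ioo (0:ℝ) 1, ‖φ x‖ ≤ M) :
    IntegrableOn (fun x : ℝ => φ x * ((x:ℂ)^(u-1) * (1-(x:ℂ))^(v-1))) (Set.Ioo 0 1) := by
  have hB : IntegrableOn (fun x:ℝ => (x:ℂ)^(u-1)*(1-(x:ℂ))^(v-1)) (Set.Ioo 0 1) := by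
    have h := Complex.betaIntegral_convergent hu hv
    rw [intervalIntegrable_iff_integrableOn_Ioc_of_le zero_le_one] at h
    exact h.mono_set Set.Ioo_subset_Ioc_self
  have hBc : ContinuousOn (fun x:ℝ => (x:ℂ)^(u-1)*(1-(x:ℂ))^(v-1)) (Set.Ioo 0 1) := by
    intro x hx
    apply ContinuousWithinAt.mul
    · exact (Complex.continuousAt_ofReal_cpow_const x (u-1) (Or.inr hx.1.ne')).continuousWithinAt
    · have hc : ContinuousAt (fun x:ℝ => (1-(x:ℂ))^(v-1)) x := by
        apply ContinuousAt.cpow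
        · exact (continuous_const.sub Complex.continuous_ofReal).continuousAt
        · exact continuousAt_const
        · left
          simp only [Complex.sub_re, Complex.one_re, Complex.ofReal_re]
          linarith [hx.2]
      exact hc.continuousWithinAt
  apply Integrable.mono' (hB.norm.const_mul M)
  · exact (hφc.mul hBc).aestronglyMeasurable measurableSet_Ioo
  · filter_upwards [ae_restrict_mem measurableSet_Ioo] with x hx
    rw [norm_mul]
    exact mul_le_mul_of_nonneg_right (hφb x hx) (norm_nonneg _)

lemma II_of_Ioo {f : ℝ → ℂ} (h : IntegrableOn f (Set.Ioo 0 1)) :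
    IntervalIntegrable f MeasureTheory.volume 0 1 := by
  rw [intervalIntegrable_iff_integrableOn_Ioc_of_le zero_le_one,
    integrableOn_Ioc_iff_integrableOn_Ioo]
  exact h

lemma li2_bound : ∃ M : ℝ, ∀ x ∈ Set.Ioo (0:ℝ) 1, ‖Li2 x‖ ≤ M := by
  obtain ⟨M, hM⟩ := isCompact_Icc.exists_bound_of_continuousOn li2_continuousOn
  exact ⟨M, fun x hx => hM x ⟨by linarith [hx.1], hx.2.le⟩⟩

section main
variable (α β : ℂ)

lemma integrable_f2 (hα : α.re < 1) (hβ : β.re < 0) :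
    IntegrableOn (fun x : ℝ => Li2 x / ((x:ℂ)^α * (1-(x:ℂ))^β)) (Set.Ioo 0 1) := by
  obtain ⟨M, hM⟩ := li2_bound
  have h := integrableOn_aux (u := 1-α) (v := 1-β)
    (by rw [Complex.sub_re, Complex.one_re]; linarith)
    (by rw [Complex.sub_re, Complex.one_re]; linarith)
    (li2_continuousOn.mono (fun x hx => ⟨by linarith [hx.1], hx.2.le⟩)) hM
  apply h.congr_fun _ measurableSet_Ioo
  intro x _
  dsimp only
  rw [show (1-α)-1 = -α by ring, show (1-β)-1 = -β by ring, Complex.cpow_neg, Complex.cpow_neg,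
    div_eq_mul_inv, mul_inv]

lemma integrable_f3 (hα : α.re < 1) (hβ : β.re < 0) :
    IntegrableOn (fun x : ℝ => Li2 x / ((x:ℂ)^(α-1) * (1-(x:ℂ))^(β+1))) (Set.Ioo 0 1) := by
  obtain ⟨M, hM⟩ := li2_bound
  have h := integrableOn_aux (u := 2-α) (v := -β)
    (by rw [Complex.sub_re]; norm_num; linarith)
    (by rw [Complex.neg_re]; linarith)
    (li2_continuousOn.mono (fun x hx => ⟨by linarith [hx.1], hx.2.le⟩)) hM
  apply h.congr_fun _ measurableSet_Ioo
  intro x _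
  dsimp only
  rw [show (2-α)-1 = -(α-1) by ring, show (-β)-1 = -(β+1) by ring, Complex.cpow_neg,
    Complex.cpow_neg, div_eq_mul_inv, mul_inv]

lemma log_sqrt_bound {t : ℝ} (ht : 0 < t) (ht1 : t ≤ 1) :
    -Real.log t * t ^ ((1:ℝ)/2) ≤ 2 := by
  have h5 := Real.log_le_sub_one_of_pos (Real.rpow_pos_of_pos ht (-(1/2):ℝ))
  rw [Real.log_rpow ht] at h5
  have h6 : -Real.log t ≤ 2 * t ^ (-(1/2):ℝ) := by nlinarith [Real.rpow_pos_of_pos ht (-(1/2):ℝ)]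
  have h7 : -Real.log t * t ^ ((1:ℝ)/2) ≤ 2 * t ^ (-(1/2):ℝ) * t ^ ((1:ℝ)/2) :=
    mul_le_mul_of_nonneg_right h6 (Real.rpow_nonneg ht.le _)
  calc -Real.log t * t ^ ((1:ℝ)/2) ≤ 2 * t ^ (-(1/2):ℝ) * t ^ ((1:ℝ)/2) := h7
    _ = 2 * t ^ ((-(1/2):ℝ) + (1:ℝ)/2) := by rw [mul_assoc, ← Real.rpow_add ht]
    _ = 2 := by norm_num

lemma integrable_f1 (hα : α.re < 1) (hβ : β.re < 0) :
    IntegrableOn (fun x : ℝ => -Complex.log (1-(x:ℂ)) / ((x:ℂ)^α * (1-(x:ℂ))^β))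
      (Set.Ioo 0 1) := by
  set φ : ℝ → ℂ := fun x => -Complex.log (1-(x:ℂ)) * (1-(x:ℂ))^((1:ℂ)/2) with hφ
  have hφc : ContinuousOn φ (Set.Ioo 0 1) := by
    intro x hx
    have hslit : (1:ℂ) - x ∈ Complex.slitPlane := by
      left; simp only [Complex.sub_re, Complex.one_re, Complex.ofReal_re]; linarith [hx.2]
    apply ContinuousWithinAt.mul
    · have hc : ContinuousAt (fun x:ℝ => Complex.log (1-(x:ℂ))) x :=
        ContinuousAt.comp (g := Complex.log) (f := fun x:ℝ => 1-(x:ℂ))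
          (continuousAt_clog hslit) ((continuous_const.sub Complex.continuous_ofReal).continuousAt)
      exact hc.neg.continuousWithinAt
    · refine (ContinuousAt.cpow ?_ continuousAt_const ?_).continuousWithinAt
      · exact (continuous_const.sub Complex.continuous_ofReal).continuousAt
      · left; simp only [Complex.sub_re, Complex.one_re, Complex.ofReal_re]; linarith [hx.2]
  have hφb : ∀ x ∈ Set.Ioo (0:ℝ) 1, ‖φ x‖ ≤ 2 := by
    intro x hx
    have ht : (0:ℝ) < 1 - x := by linarith [hx.2]
    have h1x : ((1-x:ℝ):ℂ) = 1 - (x:ℂ) := by push_cast; ring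
    rw [hφ, norm_mul, norm_neg, ← h1x, ← Complex.ofReal_log ht.le, Complex.norm_real,
      Real.norm_eq_abs, abs_of_nonpos (Real.log_nonpos ht.le (by linarith [hx.1])),
      Complex.norm_cpow_eq_rpow_re_of_pos ht]
    have : ((1:ℂ)/2).re = (1:ℝ)/2 := by norm_num
    rw [this]
    exact log_sqrt_bound ht (by linarith [hx.1])
  have h := integrableOn_aux (u := 1-α) (v := (1:ℂ)/2-β)
    (by rw [Complex.sub_re, Complex.one_re]; linarith)
    (by rw [Complex.sub_re]; norm_num; linarith) hφc hφb
  apply h.congr_fun _ measurableSet_Ioo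
  intro x hx
  have hx0 : (x:ℂ) ≠ 0 := by exact_mod_cast hx.1.ne'
  have hY0 : (1:ℂ) - x ≠ 0 := by
    rw [show (1:ℂ) - x = ((1-x:ℝ):ℂ) by push_cast; ring]
    exact_mod_cast (by linarith [hx.2] : (1:ℝ)-x ≠ 0)
  rw [hφ]
  dsimp only
  rw [show (1-α)-1 = -α by ring, mul_assoc, mul_comm ((1-(x:ℂ))^((1:ℂ)/2)), mul_assoc,
    ← Complex.cpow_add _ _ hY0, show ((1:ℂ)/2-β)-1 + (1:ℂ)/2 = -β by ring,
    Complex.cpow_neg, Complex.cpow_neg, div_eq_mul_inv, mul_inv]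

end main

lemma F_deriv (α β : ℂ) (hα1 : α ≠ 1) (hβ0 : β ≠ 0) {x : ℝ} (hx : x ∈ Set.Ioo (0:ℝ) 1) :
    HasDerivAt (fun y : ℝ => Li2 y * (y:ℂ)^(1-α) * (1-(y:ℂ))^(-β))
      (-Complex.log (1-(x:ℂ)) / ((x:ℂ)^α * (1-(x:ℂ))^β)
        + (1-α) * (Li2 x / ((x:ℂ)^α * (1-(x:ℂ))^β))
        + β * (Li2 x / ((x:ℂ)^(α-1) * (1-(x:ℂ))^(β+1)))) x := by
  obtain ⟨hx0, hx1⟩ := hx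
  have hX0 : (x:ℂ) ≠ 0 := by exact_mod_cast hx0.ne'
  have h1x : ((1-x:ℝ):ℂ) = 1 - (x:ℂ) := by push_cast; ring
  have hY0 : (1:ℂ) - (x:ℂ) ≠ 0 := by
    rw [← h1x]; exact_mod_cast (by linarith : (1:ℝ)-x ≠ 0)
  have h1α : (1:ℂ) - α ≠ 0 := sub_ne_zero.mpr (Ne.symm hα1)
  have d1 : HasDerivAt Li2 (-Complex.log (1 - (x:ℂ)) / x) x := li2_hasDerivAt ⟨hx0, hx1⟩
  have d2 : HasDerivAt (fun y:ℝ => (y:ℂ)^(1-α)) ((1-α) * (x:ℂ)^(-α)) x := by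
    have hr : -α ≠ -1 := fun h => hα1 (neg_injective h)
    have h := (hasDerivAt_ofReal_cpow_const' hx0.ne' hr).const_mul (1-α)
    have e : (fun y:ℝ => (1-α) * ((y:ℂ)^(-α+1)/(-α+1))) = fun y:ℝ => (y:ℂ)^(1-α) := by
      funext y
      rw [show -α+1 = 1-α by ring]
      field_simp
    rw [e] at h
    exact h
  have d3 : HasDerivAt (fun y:ℝ => (1-(y:ℂ))^(-β)) (β * (1-(x:ℂ))^(-β-1)) x := by
    have hr : -β-1 ≠ -1 := by
      intro h; apply hβ0
      have h2 : -β = 0 := by linear_combination h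
      exact neg_eq_zero.mp h2
    have ht0 : (1:ℝ) - x ≠ 0 := by linarith
    have base := hasDerivAt_ofReal_cpow_const' ht0 hr
    have inner : HasDerivAt (fun y:ℝ => 1-y) (-1:ℝ) x := by
      simpa using (hasDerivAt_id x).const_sub 1
    have comp := HasDerivAt.scomp x base inner
    have comp2 := comp.const_mul (-β)
    have e : (fun y : ℝ => -β * (((fun t:ℝ => (t:ℂ)^(-β-1+1)/(-β-1+1)) ∘ (fun y:ℝ => 1-y)) y))
        = fun y:ℝ => (1-(y:ℂ))^(-β) := by
      funext y
      show -β * (((1-y:ℝ):ℂ)^(-β-1+1)/(-β-1+1)) = (1-(y:ℂ))^(-β)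
      rw [show -β-1+1 = -β by ring, show ((1-y:ℝ):ℂ) = 1 - (y:ℂ) by push_cast; ring]
      field_simp
    have e2 : -β * ((-1:ℝ) • (((1-x:ℝ):ℂ)^(-β-1))) = β * (1-(x:ℂ))^(-β-1) := by
      rw [h1x, neg_one_smul ℝ]
      ring
    rw [e, e2] at comp2
    exact comp2
  have dF := (d1.mul d2).mul d3
  convert dF using 1
  · rfl
  · rfl
  have hXα : (x:ℂ)^α ≠ 0 := by
    rw [Complex.cpow_def_of_ne_zero hX0]; exact Complex.exp_ne_zero _
  have hYβ : ((1:ℂ)-(x:ℂ))^β ≠ 0 := by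
    rw [Complex.cpow_def_of_ne_zero hY0]; exact Complex.exp_ne_zero _
  simp only [Complex.cpow_sub _ _ hX0, Complex.cpow_sub _ _ hY0, Complex.cpow_add _ _ hX0,
    Complex.cpow_add _ _ hY0, Complex.cpow_neg, Complex.cpow_one, Pi.mul_apply]
  generalize Li2 x = L
  generalize Complex.log (1 - (x:ℂ)) = G
  set X : ℂ := (x:ℂ) with hXdef
  set Y : ℂ := 1 - (x:ℂ) with hYdef
  set A : ℂ := X^α with hAdef
  set B : ℂ := Y^β with hBdef
  clear_value X Y A B
  field_simp

theorem dilog_integration_by_parts (α β : ℂ) (hα : α.re < 1) (hβ : β.re < 0) :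
    (∫ x in (0:ℝ)..1, -Complex.log (1 - (x : ℂ)) / ((x : ℂ) ^ α * ((1 : ℂ) - x) ^ β))
      = -(1 - α) * (∫ x in (0:ℝ)..1, Li2 x / ((x : ℂ) ^ α * ((1 : ℂ) - x) ^ β))
        - β * ∫ x in (0:ℝ)..1, Li2 x / ((x : ℂ) ^ (α - 1) * ((1 : ℂ) - x) ^ (β + 1)) := by
  have hα1 : α ≠ 1 := by intro h; rw [h] at hα; simp at hα
  have hβ0 : β ≠ 0 := by intro h; rw [h] at hβ; simp at hβ
  have h1α : (1:ℂ) - α ≠ 0 := sub_ne_zero.mpr (Ne.symm hα1)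
  set F : ℝ → ℂ := fun y => Li2 y * (y:ℂ)^(1-α) * (1-(y:ℂ))^(-β) with hF
  set f1 : ℝ → ℂ := fun x => -Complex.log (1-(x:ℂ)) / ((x:ℂ)^α * (1-(x:ℂ))^β) with hf1
  set f2 : ℝ → ℂ := fun x => Li2 x / ((x:ℂ)^α * (1-(x:ℂ))^β) with hf2
  set f3 : ℝ → ℂ := fun x => Li2 x / ((x:ℂ)^(α-1) * (1-(x:ℂ))^(β+1)) with hf3
  have hI1 : IntervalIntegrable f1 MeasureTheory.volume 0 1 := II_of_Ioo (integrable_f1 α β hα hβ)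
  have hI2 : IntervalIntegrable f2 MeasureTheory.volume 0 1 := II_of_Ioo (integrable_f2 α β hα hβ)
  have hI3 : IntervalIntegrable f3 MeasureTheory.volume 0 1 := II_of_Ioo (integrable_f3 α β hα hβ)
  have hIsum : IntervalIntegrable (fun x => f1 x + (1-α) * f2 x + β * f3 x)
      MeasureTheory.volume 0 1 := (hI1.add (hI2.const_mul _)).add (hI3.const_mul _)
  have hcont : ContinuousOn F (Set.Icc 0 1) := by
    apply ContinuousOn.mul
    apply ContinuousOn.mul
    · exact li2_continuousOn.mono (fun x hx => ⟨by linarith [hx.1], hx.2⟩)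
    · intro x _
      exact (Complex.continuousAt_ofReal_cpow_const x (1-α)
        (Or.inl (by rw [Complex.sub_re, Complex.one_re]; linarith))).continuousWithinAt
    · intro x _
      have hc : ContinuousAt (fun y:ℝ => ((1-y:ℝ):ℂ)^(-β)) x :=
        ContinuousAt.comp (g := fun t:ℝ => (t:ℂ)^(-β)) (f := fun y:ℝ => 1-y)
          (Complex.continuousAt_ofReal_cpow_const (1-x) (-β)
            (Or.inl (by rw [Complex.neg_re]; linarith)))
          ((continuous_const.sub continuous_id).continuousAt)
      have he : (fun y:ℝ => ((1-y:ℝ):ℂ)^(-β)) = fun y:ℝ => (1-(y:ℂ))^(-β) := by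
        funext y; norm_cast
      rw [he] at hc
      exact hc.continuousWithinAt
  have hFTC := intervalIntegral.integral_eq_sub_of_hasDeriv_right_of_le zero_le_one hcont
    (fun x hx => (F_deriv α β hα1 hβ0 hx).hasDerivWithinAt) hIsum
  have hF1 : F 1 = 0 := by
    rw [hF]; dsimp only
    rw [Complex.ofReal_one, sub_self, Complex.zero_cpow (neg_ne_zero.mpr hβ0), mul_zero]
  have hF0 : F 0 = 0 := by
    rw [hF]; dsimp only
    rw [Complex.ofReal_zero, Complex.zero_cpow h1α, mul_zero, zero_mul]
  rw [hF1, hF0, sub_zero] at hFTC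
  rw [intervalIntegral.integral_add (hI1.add (hI2.const_mul _)) (hI3.const_mul _),
    intervalIntegral.integral_add hI1 (hI2.const_mul _),
    intervalIntegral.integral_const_mul, intervalIntegral.integral_const_mul] at hFTC
  linear_combination hFTC
end

section
/- For positive integers q ≥ 1 and p, m ≥ 2, the double zeta values satisfy the symmetric relation: Σ_{i+j=m-1, i,j≥0} C(p+i-1,i) C(q+j-1,j) ζ(p+i, q+j) − (-1)^q Σ_{i+j=p-1, i,j≥0} C(m+i-1,i) C(q+j-1,j) ζ(m+i, q+j) = Σ_{i+j=q-1, i,j≥0} (-1)^j C(m+i-1,i) C(p+j-1,j) ζ(m+i) ζ(p+j). -/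
/-- Riemann zeta value `ζ(a) = Σ_{n≥1} 1/n^a`. -/
noncomputable def rzeta (a : ℕ) : ℝ := ∑' n : ℕ, 1 / ((n : ℝ) + 1) ^ a

/-- Double zeta value `ζ(a,b) = Σ_{n_1 > n_2 ≥ 1} 1/(n_1^a n_2^b)`,
parametrized by `p : ℕ × ℕ` with `n_2 = p.2 + 1`, `n_1 = p.2 + p.1 + 2`. -/
noncomputable def dzeta (a b : ℕ) : ℝ :=
  ∑' p : ℕ × ℕ, 1 / (((p.2 : ℝ) + (p.1 : ℝ) + 2) ^ a * ((p.2 : ℝ) + 1) ^ b)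


noncomputable def AA (x c : ℝ) (a b g : ℕ) : ℝ :=
  ∑ i ∈ Finset.range (a+1),
    (Nat.choose (b+i) i : ℝ) * (Nat.choose (g+(a-i)) (a-i) : ℝ) /
      ((x+c)^(b+1+i) * x^(g+1+(a-i)))

noncomputable def CC (x c : ℝ) (a b g : ℕ) : ℝ :=
  ∑ i ∈ Finset.range (g+1),
    (-1:ℝ)^(g-i) * (Nat.choose (a+i) i : ℝ) * (Nat.choose (b+(g-i)) (g-i) : ℝ) /
      (x^(a+1+i) * c^(b+1+(g-i)))

lemma AA_R1 (x c : ℝ) (hx : x ≠ 0) (hxc : x + c ≠ 0) (a b g : ℕ) :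
    x * AA x c (a+1) b (g+1) = AA x c (a+1) b g + AA x c a b (g+1) := by
  unfold AA
  rw [Finset.mul_sum, Finset.sum_range_succ, Finset.sum_range_succ (n := a+1)]
  have main : ∑ i ∈ Finset.range (a+1), x *
        ((Nat.choose (b+i) i : ℝ) * (Nat.choose ((g+1)+((a+1)-i)) ((a+1)-i) : ℝ) /
          ((x+c)^(b+1+i) * x^((g+1)+1+((a+1)-i)))) =
      ∑ i ∈ Finset.range (a+1),
        ((Nat.choose (b+i) i : ℝ) * (Nat.choose (g+((a+1)-i)) ((a+1)-i) : ℝ) /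
          ((x+c)^(b+1+i) * x^(g+1+((a+1)-i))) +
        (Nat.choose (b+i) i : ℝ) * (Nat.choose ((g+1)+(a-i)) (a-i) : ℝ) /
          ((x+c)^(b+1+i) * x^((g+1)+1+(a-i)))) := by
    apply Finset.sum_congr rfl
    intro i hi
    have hia : i ≤ a := Nat.lt_succ_iff.mp (Finset.mem_range.mp hi)
    have h1 : a + 1 - i = (a - i) + 1 := by omega
    rw [h1]
    have hP : (Nat.choose ((g+1)+((a-i)+1)) ((a-i)+1) : ℝ)
        = (Nat.choose (g+((a-i)+1)) ((a-i)+1) : ℝ) + (Nat.choose ((g+1)+(a-i)) (a-i) : ℝ) := by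
      have h2 : (g+1) + ((a-i)+1) = (g+1+(a-i)) + 1 := by omega
      have h4 : g + ((a-i)+1) = g+1+(a-i) := by omega
      rw [h2, h4]
      push_cast [Nat.choose_succ_succ (g+1+(a-i)) (a-i)]
      ring
    rw [hP]
    field_simp
    ring
  rw [main, Finset.sum_add_distrib]
  have last : x * ((Nat.choose (b+(a+1)) (a+1) : ℝ) *
        (Nat.choose ((g+1)+((a+1)-(a+1))) ((a+1)-(a+1)) : ℝ) /
        ((x+c)^(b+1+(a+1)) * x^((g+1)+1+((a+1)-(a+1))))) =
      (Nat.choose (b+(a+1)) (a+1) : ℝ) * (Nat.choose (g+((a+1)-(a+1))) ((a+1)-(a+1)) : ℝ) /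
        ((x+c)^(b+1+(a+1)) * x^(g+1+((a+1)-(a+1)))) := by
    simp only [Nat.sub_self, Nat.add_zero]
    field_simp
    simp only [Nat.choose_zero_right, Nat.cast_one, mul_one]
    ring
  rw [last]
  ring


lemma mulx_helper {x : ℝ} (hx : x ≠ 0) (N D : ℝ) : x * (N / (D * x)) = N / D := by
  rw [mul_div_assoc', mul_comm x N, mul_div_mul_right N D hx]

lemma AA_zero (x c : ℝ) (b g : ℕ) : AA x c 0 b g = 1/((x+c)^(b+1) * x^(g+1)) := by
  unfold AA
  simp

lemma AA_R1z (x c : ℝ) (hx : x ≠ 0) (b g : ℕ) :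
    x * AA x c 0 b (g+1) = AA x c 0 b g := by
  rw [AA_zero, AA_zero,
    show (x+c)^(b+1) * x^(g+1+1) = ((x+c)^(b+1) * x^(g+1)) * x from by ring,
    mulx_helper hx]

lemma AA_R2z (x c : ℝ) (hxc : x + c ≠ 0) (b g : ℕ) :
    (x+c) * AA x c 0 (b+1) g = AA x c 0 b g := by
  rw [AA_zero, AA_zero,
    show (x+c)^(b+1+1) * x^(g+1) = ((x+c)^(b+1) * x^(g+1)) * (x+c) from by ring,
    mulx_helper hxc]

lemma AA_R2 (x c : ℝ) (hx : x ≠ 0) (hxc : x + c ≠ 0) (a b g : ℕ) :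
    (x+c) * AA x c (a+1) (b+1) g = AA x c (a+1) b g + AA x c a (b+1) g := by
  unfold AA
  rw [Finset.mul_sum, Finset.sum_range_succ' _ (a+1), Finset.sum_range_succ' _ (a+1)]
  have main : ∑ i ∈ Finset.range (a+1), (x+c) *
        ((Nat.choose ((b+1)+(i+1)) (i+1) : ℝ) *
          (Nat.choose (g+((a+1)-(i+1))) ((a+1)-(i+1)) : ℝ) /
          ((x+c)^((b+1)+1+(i+1)) * x^(g+1+((a+1)-(i+1))))) =
      ∑ i ∈ Finset.range (a+1),
        ((Nat.choose (b+(i+1)) (i+1) : ℝ) * (Nat.choose (g+((a+1)-(i+1))) ((a+1)-(i+1)) : ℝ) /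
          ((x+c)^(b+1+(i+1)) * x^(g+1+((a+1)-(i+1)))) +
        (Nat.choose ((b+1)+i) i : ℝ) * (Nat.choose (g+(a-i)) (a-i) : ℝ) /
          ((x+c)^((b+1)+1+i) * x^(g+1+(a-i)))) := by
    apply Finset.sum_congr rfl
    intro i hi
    have hia : i ≤ a := Nat.lt_succ_iff.mp (Finset.mem_range.mp hi)
    have h1 : (a+1) - (i+1) = a - i := by omega
    rw [h1]
    have hP : (Nat.choose ((b+1)+(i+1)) (i+1) : ℝ)
        = (Nat.choose ((b+1)+i) i : ℝ) + (Nat.choose (b+(i+1)) (i+1) : ℝ) := by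
      have h2 : (b+1) + (i+1) = (b+1+i) + 1 := by omega
      have h4 : b + (i+1) = b+1+i := by omega
      rw [h2, h4]
      push_cast [Nat.choose_succ_succ (b+1+i) i]
      ring
    rw [hP]
    field_simp
    ring
  rw [main, Finset.sum_add_distrib]
  have first : (x+c) * ((Nat.choose ((b+1)+0) 0 : ℝ) *
        (Nat.choose (g+((a+1)-0)) ((a+1)-0) : ℝ) /
        ((x+c)^((b+1)+1+0) * x^(g+1+((a+1)-0)))) =
      (Nat.choose (b+0) 0 : ℝ) * (Nat.choose (g+((a+1)-0)) ((a+1)-0) : ℝ) /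
        ((x+c)^(b+1+0) * x^(g+1+((a+1)-0))) := by
    simp only [Nat.choose_zero_right, Nat.cast_one]
    rw [show (b+1)+1+0 = (b+1+0)+1 from rfl, pow_succ]
    field_simp
  rw [first]
  ring

lemma AA_R2e (x c : ℝ) (hx : x ≠ 0) (hxc : x + c ≠ 0) (a g : ℕ) :
    (x+c) * AA x c (a+1) 0 g =
      (Nat.choose (g+(a+1)) (a+1) : ℝ) / x^(g+1+(a+1)) + AA x c a 0 g := by
  unfold AA
  rw [Finset.mul_sum, Finset.sum_range_succ' _ (a+1)]
  have main : ∑ i ∈ Finset.range (a+1), (x+c) *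
        ((Nat.choose (0+(i+1)) (i+1) : ℝ) *
          (Nat.choose (g+((a+1)-(i+1))) ((a+1)-(i+1)) : ℝ) /
          ((x+c)^(0+1+(i+1)) * x^(g+1+((a+1)-(i+1))))) =
      ∑ i ∈ Finset.range (a+1),
        (Nat.choose (0+i) i : ℝ) * (Nat.choose (g+(a-i)) (a-i) : ℝ) /
          ((x+c)^(0+1+i) * x^(g+1+(a-i))) := by
    apply Finset.sum_congr rfl
    intro i hi
    have hia : i ≤ a := Nat.lt_succ_iff.mp (Finset.mem_range.mp hi)
    have h1 : (a+1) - (i+1) = a - i := by omega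
    rw [h1]
    simp only [Nat.zero_add, Nat.choose_self, Nat.cast_one]
    rw [show 0+1+(i+1) = (0+1+i)+1 from rfl, pow_succ]
    field_simp
  rw [main]
  have first : (x+c) * ((Nat.choose (0+0) 0 : ℝ) *
        (Nat.choose (g+((a+1)-0)) ((a+1)-0) : ℝ) /
        ((x+c)^(0+1+0) * x^(g+1+((a+1)-0)))) =
      (Nat.choose (g+(a+1)) (a+1) : ℝ) / x^(g+1+(a+1)) := by
    simp only [Nat.add_zero, Nat.zero_add, Nat.sub_zero, Nat.choose_zero_right, Nat.cast_one,
      one_mul]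
    rw [show ((x+c):ℝ)^(0+1+0) * x^(g+1+(a+1)) = x^(g+1+(a+1)) * (x+c) from by ring,
      mulx_helper hxc]
  rw [first]
  ring

lemma AA_R3 (x c : ℝ) (hx : x ≠ 0) (hxc : x + c ≠ 0) (a b g : ℕ) :
    c * AA x c a (b+1) (g+1) = AA x c a b (g+1) - AA x c a (b+1) g := by
  cases a with
  | zero =>
    have h1 := AA_R2z x c hxc b (g+1)
    have h2 := AA_R1z x c hx (b+1) g
    linear_combination h1 - h2
  | succ n =>
    have h1 := AA_R2 x c hx hxc n b (g+1)
    have h2 := AA_R1 x c hx hxc n (b+1) g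
    linear_combination h1 - h2

lemma CC_zero (x c : ℝ) (a b : ℕ) : CC x c a b 0 = 1/(x^(a+1) * c^(b+1)) := by
  unfold CC
  simp

lemma CC_R4 (x c : ℝ) (hx : x ≠ 0) (hc : c ≠ 0) (a b g : ℕ) :
    x * CC x c (a+1) b (g+1) = CC x c a b (g+1) + CC x c (a+1) b g := by
  unfold CC
  rw [Finset.mul_sum, Finset.sum_range_succ' _ (g+1), Finset.sum_range_succ' _ (g+1)]
  have main : ∑ i ∈ Finset.range (g+1), x *
        ((-1:ℝ)^((g+1)-(i+1)) * (Nat.choose ((a+1)+(i+1)) (i+1) : ℝ) *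
          (Nat.choose (b+((g+1)-(i+1))) ((g+1)-(i+1)) : ℝ) /
          (x^((a+1)+1+(i+1)) * c^(b+1+((g+1)-(i+1))))) =
      ∑ i ∈ Finset.range (g+1),
        ((-1:ℝ)^((g+1)-(i+1)) * (Nat.choose (a+(i+1)) (i+1) : ℝ) *
          (Nat.choose (b+((g+1)-(i+1))) ((g+1)-(i+1)) : ℝ) /
          (x^(a+1+(i+1)) * c^(b+1+((g+1)-(i+1)))) +
        (-1:ℝ)^(g-i) * (Nat.choose ((a+1)+i) i : ℝ) * (Nat.choose (b+(g-i)) (g-i) : ℝ) /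
          (x^((a+1)+1+i) * c^(b+1+(g-i)))) := by
    apply Finset.sum_congr rfl
    intro i hi
    have hig : i ≤ g := Nat.lt_succ_iff.mp (Finset.mem_range.mp hi)
    have h1 : (g+1) - (i+1) = g - i := by omega
    rw [h1]
    have hP : (Nat.choose ((a+1)+(i+1)) (i+1) : ℝ)
        = (Nat.choose ((a+1)+i) i : ℝ) + (Nat.choose (a+(i+1)) (i+1) : ℝ) := by
      have h2 : (a+1) + (i+1) = (a+1+i) + 1 := by omega
      have h4 : a + (i+1) = a+1+i := by omega
      rw [h2, h4]
      push_cast [Nat.choose_succ_succ (a+1+i) i]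
      ring
    rw [hP]
    field_simp
    ring
  rw [main, Finset.sum_add_distrib]
  have first : x * ((-1:ℝ)^((g+1)-0) * (Nat.choose ((a+1)+0) 0 : ℝ) *
        (Nat.choose (b+((g+1)-0)) ((g+1)-0) : ℝ) /
        (x^((a+1)+1+0) * c^(b+1+((g+1)-0)))) =
      (-1:ℝ)^((g+1)-0) * (Nat.choose (a+0) 0 : ℝ) *
        (Nat.choose (b+((g+1)-0)) ((g+1)-0) : ℝ) /
        (x^(a+1+0) * c^(b+1+((g+1)-0))) := by
    simp only [Nat.choose_zero_right, Nat.cast_one, Nat.sub_zero, Nat.add_zero]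
    rw [show x^(a+1+1) * c^(b+1+(g+1)) = (x^(a+1) * c^(b+1+(g+1))) * x from by ring,
      mulx_helper hx]
  rw [first]
  ring

lemma CC_R5 (x c : ℝ) (hx : x ≠ 0) (hc : c ≠ 0) (a b g : ℕ) :
    c * CC x c a (b+1) (g+1) = CC x c a b (g+1) - CC x c a (b+1) g := by
  unfold CC
  rw [Finset.mul_sum, Finset.sum_range_succ, Finset.sum_range_succ (n := g+1)]
  have main : ∑ i ∈ Finset.range (g+1), c *
        ((-1:ℝ)^((g+1)-i) * (Nat.choose (a+i) i : ℝ) *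
          (Nat.choose ((b+1)+((g+1)-i)) ((g+1)-i) : ℝ) /
          (x^(a+1+i) * c^((b+1)+1+((g+1)-i)))) =
      ∑ i ∈ Finset.range (g+1),
        ((-1:ℝ)^((g+1)-i) * (Nat.choose (a+i) i : ℝ) *
          (Nat.choose (b+((g+1)-i)) ((g+1)-i) : ℝ) /
          (x^(a+1+i) * c^(b+1+((g+1)-i))) -
        (-1:ℝ)^(g-i) * (Nat.choose (a+i) i : ℝ) * (Nat.choose ((b+1)+(g-i)) (g-i) : ℝ) /
          (x^(a+1+i) * c^((b+1)+1+(g-i)))) := by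
    apply Finset.sum_congr rfl
    intro i hi
    have hig : i ≤ g := Nat.lt_succ_iff.mp (Finset.mem_range.mp hi)
    have h1 : (g+1) - i = (g - i) + 1 := by omega
    rw [h1]
    have hP : (Nat.choose ((b+1)+((g-i)+1)) ((g-i)+1) : ℝ)
        = (Nat.choose ((b+1)+(g-i)) (g-i) : ℝ) + (Nat.choose (b+((g-i)+1)) ((g-i)+1) : ℝ) := by
      have h2 : (b+1) + ((g-i)+1) = (b+1+(g-i)) + 1 := by omega
      have h4 : b + ((g-i)+1) = b+1+(g-i) := by omega
      rw [h2, h4]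
      push_cast [Nat.choose_succ_succ (b+1+(g-i)) (g-i)]
      ring
    rw [hP]
    field_simp
    ring
  rw [main]
  have last : c * ((-1:ℝ)^((g+1)-(g+1)) * (Nat.choose (a+(g+1)) (g+1) : ℝ) *
        (Nat.choose ((b+1)+((g+1)-(g+1))) ((g+1)-(g+1)) : ℝ) /
        (x^(a+1+(g+1)) * c^((b+1)+1+((g+1)-(g+1))))) =
      (-1:ℝ)^((g+1)-(g+1)) * (Nat.choose (a+(g+1)) (g+1) : ℝ) *
        (Nat.choose (b+((g+1)-(g+1))) ((g+1)-(g+1)) : ℝ) /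
        (x^(a+1+(g+1)) * c^(b+1+((g+1)-(g+1)))) := by
    simp only [Nat.sub_self, Nat.add_zero, Nat.choose_zero_right, Nat.cast_one, pow_zero]
    rw [show x^(a+1+(g+1)) * c^(b+1+1) = (x^(a+1+(g+1)) * c^(b+1)) * c from by ring,
      mulx_helper hc]
  rw [last, Finset.sum_sub_distrib]
  ring

lemma CC_split (x c : ℝ) (hx : x ≠ 0) (hc : c ≠ 0) (g : ℕ) :
    CC x c 0 0 (g+1) = 1/(x^(g+2) * c) - (1/c) * CC x c 0 0 g := by
  unfold CC
  rw [Finset.sum_range_succ (n := g+1), Finset.mul_sum]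
  have last : (-1:ℝ)^((g+1)-(g+1)) * (Nat.choose (0+(g+1)) (g+1) : ℝ) *
        (Nat.choose (0+((g+1)-(g+1))) ((g+1)-(g+1)) : ℝ) /
        (x^(0+1+(g+1)) * c^(0+1+((g+1)-(g+1)))) = 1/(x^(g+2) * c) := by
    simp only [Nat.sub_self, Nat.zero_add, Nat.add_zero, Nat.choose_self, Nat.choose_zero_right,
      Nat.cast_one, pow_zero, pow_one]
    rw [show (0:ℕ)+1+(g+1) = g+2 from by omega]
    ring
  rw [last]
  have main : ∑ i ∈ Finset.range (g+1),
        (-1:ℝ)^((g+1)-i) * (Nat.choose (0+i) i : ℝ) *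
          (Nat.choose (0+((g+1)-i)) ((g+1)-i) : ℝ) /
          (x^(0+1+i) * c^(0+1+((g+1)-i))) =
      ∑ i ∈ Finset.range (g+1),
        (-(1/c * ((-1:ℝ)^(g-i) * (Nat.choose (0+i) i : ℝ) * (Nat.choose (0+(g-i)) (g-i) : ℝ) /
          (x^(0+1+i) * c^(0+1+(g-i)))))) := by
    apply Finset.sum_congr rfl
    intro i hi
    have hig : i ≤ g := Nat.lt_succ_iff.mp (Finset.mem_range.mp hi)
    have h1 : (g+1) - i = (g - i) + 1 := by omega
    rw [h1]
    simp only [Nat.zero_add, Nat.choose_self, Nat.choose_zero_right, Nat.cast_one]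
    rw [show (0:ℕ)+1+((g-i)+1) = ((0+1+(g-i))+1 : ℕ) from by omega, pow_succ (c) (0+1+(g-i))]
    field_simp
    ring
  rw [main, Finset.sum_neg_distrib]
  ring

lemma CC_X (x c : ℝ) (hx : x ≠ 0) (hc : c ≠ 0) (g : ℕ) :
    (x+c) * CC x c 0 0 g = 1/x^(g+1) + (-1:ℝ)^g * (1/c^(g+1)) := by
  induction g with
  | zero =>
    rw [CC_zero]
    simp only [pow_zero, pow_one, one_mul]
    field_simp
    ring
  | succ n IH =>
    rw [CC_split x c hx hc n]
    have expand : (x+c) * (1/(x^(n+2) * c) - (1/c) * CC x c 0 0 n) =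
        (x+c) * (1/(x^(n+2) * c)) - (1/c) * ((x+c) * CC x c 0 0 n) := by ring
    rw [expand, IH]
    field_simp
    ring

lemma PF_aux (x c : ℝ) (hx : 0 < x) (hc : 0 < c) :
    ∀ n a b g : ℕ, a + b + g ≤ n →
      AA x c a b g - (-1:ℝ)^(g+1) * AA c x b a g - CC x c a b g = 0 := by
  have hx0 : x ≠ 0 := hx.ne'
  have hc0 : c ≠ 0 := hc.ne'
  have hxc : x + c ≠ 0 := by positivity
  have hcx : c + x ≠ 0 := by rw [add_comm]; exact hxc
  intro n
  induction n with
  | zero =>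
    intro a b g h
    obtain ⟨rfl, rfl, rfl⟩ : a = 0 ∧ b = 0 ∧ g = 0 := by omega
    rw [AA_zero, AA_zero, CC_zero]
    norm_num
    field_simp
    ring
  | succ n IH =>
    intro a b g hn
    match a, b, g with
    | 0, 0, 0 =>
      rw [AA_zero, AA_zero, CC_zero]
      norm_num
      field_simp
      ring
    | a+1, b+1, 0 =>
      have h1 := IH a (b+1) 0 (by omega)
      have h2 := IH (a+1) b 0 (by omega)
      have e1 := AA_R2 x c hx0 hxc a b 0
      have e2 := AA_R2 c x hc0 hcx b a 0
      rw [add_comm c x] at e2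
      have e3 : (x+c) * CC x c (a+1) (b+1) 0 = CC x c a (b+1) 0 + CC x c (a+1) b 0 := by
        rw [CC_zero, CC_zero, CC_zero]
        field_simp
        ring
      have key : (x+c) * (AA x c (a+1) (b+1) 0 - (-1:ℝ)^(0+1) * AA c x (b+1) (a+1) 0
          - CC x c (a+1) (b+1) 0) = 0 := by
        linear_combination e1 + e2 - e3 + h1 + h2
      exact (mul_eq_zero.mp key).resolve_left hxc
    | a+1, 0, 0 =>
      have h1 := IH a 0 0 (by omega)
      have e1 := AA_R2e x c hx0 hxc a 0
      have e2 := AA_R2z c x hcx a 0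
      rw [add_comm c x] at e2
      have e3 : (x+c) * CC x c (a+1) 0 0 = CC x c a 0 0
          + (Nat.choose (0+(a+1)) (a+1) : ℝ) / x^(0+1+(a+1)) := by
        rw [CC_zero, CC_zero]
        simp only [Nat.zero_add, Nat.choose_self, Nat.cast_one]
        field_simp
        ring
      have key : (x+c) * (AA x c (a+1) 0 0 - (-1:ℝ)^(0+1) * AA c x 0 (a+1) 0
          - CC x c (a+1) 0 0) = 0 := by
        linear_combination e1 + e2 - e3 + h1
      exact (mul_eq_zero.mp key).resolve_left hxc
    | 0, b+1, 0 =>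
      have h1 := IH 0 b 0 (by omega)
      have e1 := AA_R2z x c hxc b 0
      have e2 := AA_R2e c x hc0 hcx b 0
      rw [add_comm c x] at e2
      have e3 : (x+c) * CC x c 0 (b+1) 0 = CC x c 0 b 0
          + (Nat.choose (0+(b+1)) (b+1) : ℝ) / c^(0+1+(b+1)) := by
        rw [CC_zero, CC_zero]
        simp only [Nat.zero_add, Nat.choose_self, Nat.cast_one]
        field_simp
        ring
      have key : (x+c) * (AA x c 0 (b+1) 0 - (-1:ℝ)^(0+1) * AA c x (b+1) 0 0
          - CC x c 0 (b+1) 0) = 0 := by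
        linear_combination e1 + e2 - e3 + h1
      exact (mul_eq_zero.mp key).resolve_left hxc
    | a+1, b, g+1 =>
      have h1 := IH a b (g+1) (by omega)
      have h2 := IH (a+1) b g (by omega)
      have e1 := AA_R1 x c hx0 hxc a b g
      have e2 := AA_R3 c x hc0 hcx b a g
      have e3 := CC_R4 x c hx0 hc0 a b g
      have key : x * (AA x c (a+1) b (g+1) - (-1:ℝ)^((g+1)+1) * AA c x b (a+1) (g+1)
          - CC x c (a+1) b (g+1)) = 0 := by
        linear_combination e1 - (-1:ℝ)^g * e2 - e3 + h1 + h2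
      exact (mul_eq_zero.mp key).resolve_left hx0
    | 0, b+1, g+1 =>
      have h1 := IH 0 b (g+1) (by omega)
      have h2 := IH 0 (b+1) g (by omega)
      have e1 := AA_R3 x c hx0 hxc 0 b g
      have e2 := AA_R1 c x hc0 hcx b 0 g
      have e3 := CC_R5 x c hx0 hc0 0 b g
      have key : c * (AA x c 0 (b+1) (g+1) - (-1:ℝ)^((g+1)+1) * AA c x (b+1) 0 (g+1)
          - CC x c 0 (b+1) (g+1)) = 0 := by
        linear_combination e1 - (-1:ℝ)^g * e2 - e3 + h1 - h2
      exact (mul_eq_zero.mp key).resolve_left hc0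
    | 0, 0, g+1 =>
      have hCC := CC_X x c hx0 hc0 (g+1)
      have hCC' : CC x c 0 0 (g+1) = (1/x^(g+2) + (-1:ℝ)^(g+1) * (1/c^(g+2)))/(x+c) := by
        rw [eq_div_iff hxc]
        linear_combination hCC
      rw [AA_zero, AA_zero, hCC']
      field_simp
      ring

lemma summable_32 : Summable (fun k : ℕ => 1 / (((k:ℝ)+1) * Real.sqrt ((k:ℝ)+1))) := by
  have h := Real.summable_nat_rpow_inv.mpr (by norm_num : (1:ℝ) < 3/2)
  have h2 := (summable_nat_add_iff 1).mpr h
  refine h2.congr fun n => ?_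
  have hp : (0:ℝ) < (n:ℝ)+1 := by positivity
  push_cast
  rw [show (3:ℝ)/2 = 1 + 1/2 from by norm_num, Real.rpow_add hp, Real.rpow_one,
    ← Real.sqrt_eq_rpow, one_div]

lemma summable_dom : Summable (fun v : ℕ×ℕ =>
    (1 / (((v.1:ℝ)+1) * Real.sqrt ((v.1:ℝ)+1))) * (1 / (((v.2:ℝ)+1) * Real.sqrt ((v.2:ℝ)+1)))) := by
  have hn : Summable (fun k : ℕ => ‖1 / (((k:ℝ)+1) * Real.sqrt ((k:ℝ)+1))‖) := by
    refine summable_32.congr fun n => ?_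
    rw [Real.norm_of_nonneg (by positivity)]
  exact summable_mul_of_summable_norm
    (f := fun k : ℕ => 1 / (((k:ℝ)+1) * Real.sqrt ((k:ℝ)+1)))
    (g := fun k : ℕ => 1 / (((k:ℝ)+1) * Real.sqrt ((k:ℝ)+1))) hn hn

lemma key_ineq (α β : ℕ) (hα : 2 ≤ α) (hβ : 1 ≤ β) (u w : ℝ) (hu : 0 ≤ u) (hw : 0 ≤ w) :
    ((u+1) * Real.sqrt (u+1)) * ((w+1) * Real.sqrt (w+1)) ≤ (w+u+2)^α * (w+1)^β := by
  have h1 : (1:ℝ) ≤ w+u+2 := by linarith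
  have h2 : (1:ℝ) ≤ w+1 := by linarith
  have step1 : (w+u+2)^2 * (w+1)^1 ≤ (w+u+2)^α * (w+1)^β := by
    apply mul_le_mul (pow_le_pow_right₀ h1 hα) (pow_le_pow_right₀ h2 hβ) (by positivity)
      (by positivity)
  refine le_trans ?_ step1
  rw [pow_one]
  have hL : (0:ℝ) ≤ ((u+1) * Real.sqrt (u+1)) * ((w+1) * Real.sqrt (w+1)) := by positivity
  have hR : (0:ℝ) ≤ (w+u+2)^2 * (w+1) := by positivity
  rw [← pow_le_pow_iff_left₀ hL hR (two_ne_zero)]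
  have hsq : (((u+1) * Real.sqrt (u+1)) * ((w+1) * Real.sqrt (w+1)))^2
      = (u+1)^3 * (w+1)^3 := by
    rw [mul_pow, mul_pow, mul_pow, Real.sq_sqrt (by linarith : (0:ℝ) ≤ u+1),
      Real.sq_sqrt (by linarith : (0:ℝ) ≤ w+1)]
    ring
  rw [hsq]
  have hkey : (u+1)^3 * (w+1) ≤ (w+u+2)^4 := by
    have e1 : (u+1)^3 ≤ (w+u+2)^3 := pow_le_pow_left₀ (by linarith) (by linarith) 3
    have e2 : (w+1) ≤ (w+u+2) := by linarith
    calc (u+1)^3 * (w+1) ≤ (w+u+2)^3 * (w+u+2) :=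
          mul_le_mul e1 e2 (by linarith) (by positivity)
      _ = (w+u+2)^4 := by ring
  calc (u+1)^3 * (w+1)^3 = ((u+1)^3 * (w+1)) * (w+1)^2 := by ring
    _ ≤ (w+u+2)^4 * (w+1)^2 := by
        apply mul_le_mul_of_nonneg_right hkey (by positivity)
    _ = ((w+u+2)^2 * (w+1))^2 := by ring

lemma summable_fam1 (α β : ℕ) (hα : 2 ≤ α) (hβ : 1 ≤ β) :
    Summable (fun v : ℕ×ℕ => 1 / (((v.2:ℝ) + (v.1:ℝ) + 2)^α * ((v.2:ℝ)+1)^β)) := by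
  refine Summable.of_nonneg_of_le (fun v => by positivity) (fun v => ?_) summable_dom
  rw [div_mul_div_comm, one_mul]
  apply one_div_le_one_div_of_le (by positivity)
  exact key_ineq α β hα hβ (v.1:ℝ) (v.2:ℝ) (by positivity) (by positivity)

lemma summable_fam2 (α β : ℕ) (hα : 2 ≤ α) (hβ : 1 ≤ β) :
    Summable (fun v : ℕ×ℕ => 1 / (((v.1:ℝ) + (v.2:ℝ) + 2)^α * ((v.1:ℝ)+1)^β)) := by
  have h := (summable_fam1 α β hα hβ).prod_symm
  refine h.congr fun v => ?_
  simp only [Prod.fst_swap, Prod.snd_swap]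

lemma summable_one_dim (α : ℕ) (hα : 2 ≤ α) :
    Summable (fun n : ℕ => 1 / ((n:ℝ)+1)^α) := by
  have h := Real.summable_one_div_nat_pow.mpr (by omega : 1 < α)
  have h2 := (summable_nat_add_iff 1).mpr h
  refine h2.congr fun n => ?_
  push_cast
  rfl

lemma summable_fam3 (α β : ℕ) (hα : 2 ≤ α) (hβ : 2 ≤ β) :
    Summable (fun v : ℕ×ℕ => 1 / (((v.2:ℝ)+1)^α * ((v.1:ℝ)+1)^β)) := by
  have hf : Summable (fun k : ℕ => ‖1 / ((k:ℝ)+1)^β‖) :=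
    (summable_one_dim β hβ).congr fun n => (Real.norm_of_nonneg (by positivity)).symm
  have hg : Summable (fun k : ℕ => ‖1 / ((k:ℝ)+1)^α‖) :=
    (summable_one_dim α hα).congr fun n => (Real.norm_of_nonneg (by positivity)).symm
  have h := summable_mul_of_summable_norm (f := fun k : ℕ => 1 / ((k:ℝ)+1)^β)
    (g := fun n : ℕ => 1 / ((n:ℝ)+1)^α) hf hg
  refine h.congr fun v => ?_
  rw [div_mul_div_comm, one_mul, mul_comm]

lemma dzeta_swap (α β : ℕ) :
    dzeta α β = ∑' v : ℕ×ℕ, 1 / (((v.1:ℝ) + (v.2:ℝ) + 2)^α * ((v.1:ℝ)+1)^β) := by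
  rw [dzeta, ← Equiv.tsum_eq (Equiv.prodComm ℕ ℕ)]
  exact tsum_congr fun v => by simp

lemma tsum_prod_eq (α β : ℕ) (hα : 2 ≤ α) (hβ : 2 ≤ β) :
    ∑' v : ℕ×ℕ, 1 / (((v.2:ℝ)+1)^α * ((v.1:ℝ)+1)^β) = rzeta α * rzeta β := by
  have hf : Summable (fun k : ℕ => ‖1 / ((k:ℝ)+1)^β‖) :=
    (summable_one_dim β hβ).congr fun n => (Real.norm_of_nonneg (by positivity)).symm
  have hg : Summable (fun k : ℕ => ‖1 / ((k:ℝ)+1)^α‖) :=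
    (summable_one_dim α hα).congr fun n => (Real.norm_of_nonneg (by positivity)).symm
  have h := tsum_mul_tsum_of_summable_norm hf hg
  rw [rzeta, rzeta, mul_comm, h]
  exact tsum_congr fun v => by rw [div_mul_div_comm, one_mul, mul_comm]

theorem double_zeta_symmetric (p q m : ℕ) (hq : 1 ≤ q) (hp : 2 ≤ p) (hm : 2 ≤ m) :
    (∑ i ∈ Finset.range m, (Nat.choose (p + i - 1) i : ℝ) *
        (Nat.choose (q + (m - 1 - i) - 1) (m - 1 - i) : ℝ) * dzeta (p + i) (q + (m - 1 - i)))
      - (-1 : ℝ) ^ q * ∑ i ∈ Finset.range p, (Nat.choose (m + i - 1) i : ℝ) *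
        (Nat.choose (q + (p - 1 - i) - 1) (p - 1 - i) : ℝ) * dzeta (m + i) (q + (p - 1 - i))
    = ∑ i ∈ Finset.range q, (-1 : ℝ) ^ (q - 1 - i) * (Nat.choose (m + i - 1) i : ℝ) *
        (Nat.choose (p + (q - 1 - i) - 1) (q - 1 - i) : ℝ) *
        rzeta (m + i) * rzeta (p + (q - 1 - i)) := by
  obtain ⟨A, rfl⟩ : ∃ A, m = A + 2 := ⟨m - 2, by omega⟩
  obtain ⟨B, rfl⟩ : ∃ B, p = B + 2 := ⟨p - 2, by omega⟩
  obtain ⟨G, rfl⟩ : ∃ G, q = G + 1 := ⟨q - 1, by omega⟩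
  clear hq hp hm
  have h1 : (∑ i ∈ Finset.range (A+2), (Nat.choose (B + 2 + i - 1) i : ℝ) *
        (Nat.choose (G + 1 + (A + 2 - 1 - i) - 1) (A + 2 - 1 - i) : ℝ) *
        dzeta (B + 2 + i) (G + 1 + (A + 2 - 1 - i)))
      = ∑' v : ℕ×ℕ, AA ((v.2:ℝ)+1) ((v.1:ℝ)+1) (A+1) (B+1) G := by
    have step : ∀ i ∈ Finset.range (A+2), (Nat.choose (B + 2 + i - 1) i : ℝ) *
        (Nat.choose (G + 1 + (A + 2 - 1 - i) - 1) (A + 2 - 1 - i) : ℝ) *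
        dzeta (B + 2 + i) (G + 1 + (A + 2 - 1 - i))
        = ∑' v : ℕ×ℕ, (Nat.choose ((B+1) + i) i : ℝ) *
            (Nat.choose (G + ((A+1) - i)) ((A+1) - i) : ℝ) *
            (1 / (((v.2:ℝ) + (v.1:ℝ) + 2) ^ ((B+1)+1+i) * ((v.2:ℝ)+1) ^ (G+1+((A+1)-i)))) := by
      intro i hi
      rw [show B + 2 + i - 1 = (B+1) + i from by omega,
        show A + 2 - 1 - i = (A+1) - i from by omega,
        show G + 1 + ((A+1) - i) - 1 = G + ((A+1) - i) from by omega,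
        show B + 2 + i = (B+1)+1+i from by omega,
        show G + 1 + ((A+1) - i) = G+1+((A+1)-i) from rfl, dzeta, ← tsum_mul_left]
    rw [Finset.sum_congr rfl step, ← Summable.tsum_finsetSum (fun i hi => ((summable_fam1 ((B+1)+1+i)
      (G+1+((A+1)-i)) (by omega) (by omega)).mul_left _))]
    refine tsum_congr fun v => ?_
    unfold AA
    refine Finset.sum_congr rfl fun i hi => ?_
    rw [mul_one_div, show ((v.2:ℝ)+1) + ((v.1:ℝ)+1) = (v.2:ℝ) + (v.1:ℝ) + 2 from by ring]
  have h2 : (∑ i ∈ Finset.range (B+2), (Nat.choose (A + 2 + i - 1) i : ℝ) *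
        (Nat.choose (G + 1 + (B + 2 - 1 - i) - 1) (B + 2 - 1 - i) : ℝ) *
        dzeta (A + 2 + i) (G + 1 + (B + 2 - 1 - i)))
      = ∑' v : ℕ×ℕ, AA ((v.1:ℝ)+1) ((v.2:ℝ)+1) (B+1) (A+1) G := by
    have step : ∀ i ∈ Finset.range (B+2), (Nat.choose (A + 2 + i - 1) i : ℝ) *
        (Nat.choose (G + 1 + (B + 2 - 1 - i) - 1) (B + 2 - 1 - i) : ℝ) *
        dzeta (A + 2 + i) (G + 1 + (B + 2 - 1 - i))
        = ∑' v : ℕ×ℕ, (Nat.choose ((A+1) + i) i : ℝ) *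
            (Nat.choose (G + ((B+1) - i)) ((B+1) - i) : ℝ) *
            (1 / (((v.1:ℝ) + (v.2:ℝ) + 2) ^ ((A+1)+1+i) * ((v.1:ℝ)+1) ^ (G+1+((B+1)-i)))) := by
      intro i hi
      rw [show A + 2 + i - 1 = (A+1) + i from by omega,
        show B + 2 - 1 - i = (B+1) - i from by omega,
        show G + 1 + ((B+1) - i) - 1 = G + ((B+1) - i) from by omega,
        show A + 2 + i = (A+1)+1+i from by omega,
        dzeta_swap, ← tsum_mul_left]
    rw [Finset.sum_congr rfl step, ← Summable.tsum_finsetSum (fun i hi => ((summable_fam2 ((A+1)+1+i)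
      (G+1+((B+1)-i)) (by omega) (by omega)).mul_left _))]
    refine tsum_congr fun v => ?_
    unfold AA
    refine Finset.sum_congr rfl fun i hi => ?_
    rw [mul_one_div, show ((v.1:ℝ)+1) + ((v.2:ℝ)+1) = (v.1:ℝ) + (v.2:ℝ) + 2 from by ring]
  have h3 : (∑ i ∈ Finset.range (G+1), (-1 : ℝ) ^ (G + 1 - 1 - i) *
        (Nat.choose (A + 2 + i - 1) i : ℝ) *
        (Nat.choose (B + 2 + (G + 1 - 1 - i) - 1) (G + 1 - 1 - i) : ℝ) *
        rzeta (A + 2 + i) * rzeta (B + 2 + (G + 1 - 1 - i)))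
      = ∑' v : ℕ×ℕ, CC ((v.2:ℝ)+1) ((v.1:ℝ)+1) (A+1) (B+1) G := by
    have step : ∀ i ∈ Finset.range (G+1), (-1 : ℝ) ^ (G + 1 - 1 - i) *
        (Nat.choose (A + 2 + i - 1) i : ℝ) *
        (Nat.choose (B + 2 + (G + 1 - 1 - i) - 1) (G + 1 - 1 - i) : ℝ) *
        rzeta (A + 2 + i) * rzeta (B + 2 + (G + 1 - 1 - i))
        = ∑' v : ℕ×ℕ, (-1:ℝ)^(G-i) * (Nat.choose ((A+1) + i) i : ℝ) *
            (Nat.choose ((B+1) + (G-i)) (G-i) : ℝ) *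
            (1 / (((v.2:ℝ)+1) ^ ((A+1)+1+i) * ((v.1:ℝ)+1) ^ ((B+1)+1+(G-i)))) := by
      intro i hi
      rw [show G + 1 - 1 - i = G - i from by omega,
        show A + 2 + i - 1 = (A+1) + i from by omega,
        show B + 2 + (G - i) - 1 = (B+1) + (G-i) from by omega,
        show A + 2 + i = (A+1)+1+i from by omega,
        show B + 2 + (G - i) = (B+1)+1+(G-i) from by omega]
      rw [show ((-1:ℝ)^(G-i) * (Nat.choose ((A+1) + i) i : ℝ) *
            (Nat.choose ((B+1) + (G-i)) (G-i) : ℝ) * rzeta ((A+1)+1+i) * rzeta ((B+1)+1+(G-i)))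
          = ((-1:ℝ)^(G-i) * (Nat.choose ((A+1) + i) i : ℝ) *
            (Nat.choose ((B+1) + (G-i)) (G-i) : ℝ)) *
            (rzeta ((A+1)+1+i) * rzeta ((B+1)+1+(G-i))) from by ring,
        ← tsum_prod_eq ((A+1)+1+i) ((B+1)+1+(G-i)) (by omega) (by omega), ← tsum_mul_left]
    rw [Finset.sum_congr rfl step, ← Summable.tsum_finsetSum (fun i hi => ((summable_fam3 ((A+1)+1+i)
      ((B+1)+1+(G-i)) (by omega) (by omega)).mul_left _))]
    refine tsum_congr fun v => ?_
    unfold CC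
    refine Finset.sum_congr rfl fun i hi => ?_
    rw [mul_one_div]
  rw [h1, h2, h3]
  have sum1 : Summable (fun v : ℕ×ℕ => AA ((v.2:ℝ)+1) ((v.1:ℝ)+1) (A+1) (B+1) G) := by
    unfold AA
    refine summable_sum fun i hi => ?_
    refine ((summable_fam1 ((B+1)+1+i) (G+1+((A+1)-i)) (by omega) (by omega)).mul_left
      ((Nat.choose ((B+1)+i) i : ℝ) * (Nat.choose (G+((A+1)-i)) ((A+1)-i) : ℝ))).congr
      fun v => ?_
    rw [mul_one_div, show ((v.2:ℝ)+(v.1:ℝ)+2) = ((v.2:ℝ)+1)+((v.1:ℝ)+1) from by ring]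
  have sum2 : Summable (fun v : ℕ×ℕ => AA ((v.1:ℝ)+1) ((v.2:ℝ)+1) (B+1) (A+1) G) := by
    unfold AA
    refine summable_sum fun i hi => ?_
    refine ((summable_fam2 ((A+1)+1+i) (G+1+((B+1)-i)) (by omega) (by omega)).mul_left
      ((Nat.choose ((A+1)+i) i : ℝ) * (Nat.choose (G+((B+1)-i)) ((B+1)-i) : ℝ))).congr
      fun v => ?_
    rw [mul_one_div, show ((v.1:ℝ)+(v.2:ℝ)+2) = ((v.1:ℝ)+1)+((v.2:ℝ)+1) from by ring]
  rw [show ((-1:ℝ)^(G+1) * ∑' v : ℕ×ℕ, AA ((v.1:ℝ)+1) ((v.2:ℝ)+1) (B+1) (A+1) G)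
      = ∑' v : ℕ×ℕ, (-1:ℝ)^(G+1) * AA ((v.1:ℝ)+1) ((v.2:ℝ)+1) (B+1) (A+1) G from
      (tsum_mul_left).symm,
    ← Summable.tsum_sub sum1 (sum2.mul_left _)]
  refine tsum_congr fun v => ?_
  have hPF := PF_aux ((v.2:ℝ)+1) ((v.1:ℝ)+1) (by positivity) (by positivity)
    ((A+1)+(B+1)+G) (A+1) (B+1) G le_rfl
  linarith [hPF]
end
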